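/- arXiv:math/0702086 — 6 statements merged into one kernel-verified Lean document; each statement's English description precedes it below -/
import Mathlib

section
/- Let R be a commutative integral domain. If the solution space of a given Hermite–Padé interpolation problem over R admits a normalised σ-basis, then this normalised σ-basis is uniquely determined: any two normalised σ-bases (p₁,…,p_m) and (q₁,…,q_m) of the same problem satisfy p_r = q_r for all r. -/
set_option linter.unusedSectionVars false
set_option linter.unusedTactic false
set_option maxHeartbeats 1000000


open Polynomial

/-- The term `nᵢ - deg pᵢ` entering the defect, valued `⊤` when `pᵢ = 0`
(i.e. when `deg pᵢ = -∞`). -/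
def defectTerm {K : Type*} [Semiring K] (ni : ℕ) (p : K[X]) : WithTop ℤ :=
  WithBot.recBotCoe (⊤ : WithTop ℤ) (fun d : ℕ => (((ni : ℤ) - (d : ℤ) : ℤ) : WithTop ℤ)) p.degree

/-- The defect of a polynomial vector `p` with respect to the degree bounds `n`:
the minimum of `nᵢ - deg pᵢ` over all components (components with `pᵢ = 0`
contribute `⊤` and hence do not affect the minimum unless `p = 0`). -/
def defect {K : Type*} [Semiring K] {m : ℕ} (n : Fin m → ℕ) (p : Fin m → K[X]) : WithTop ℤ :=
  Finset.univ.inf fun i => defectTerm (n i) (p i)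

/-- `p` is a solution of the Hermite–Padé interpolation problem given by the
power series `f` and the order `σ`: the coefficient of `x^k` in
`p₁·f₁ + ⋯ + p_m·f_m` vanishes for all `k < σ`, i.e. `ord (p·f) ≥ σ`. -/
def IsSolution {K : Type*} [CommSemiring K] {m : ℕ} (f : Fin m → PowerSeries K) (σ : ℕ)
    (p : Fin m → K[X]) : Prop :=
  ∀ k < σ, PowerSeries.coeff k (∑ i, (p i : PowerSeries K) * f i) = 0

/-- `i` is the critical index of `p`: the least index at which the defect is attained. -/
def IsCriticalIndex {K : Type*} [Semiring K] {m : ℕ} (n : Fin m → ℕ) (p : Fin m → K[X])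
    (i : Fin m) : Prop :=
  defectTerm (n i) (p i) = defect n p ∧ ∀ j : Fin m, j < i → defectTerm (n j) (p j) ≠ defect n p

/-- `p` is normalised: its component at its critical index is monic. -/
def IsNormalisedVec {K : Type*} [Semiring K] {m : ℕ} (n : Fin m → ℕ) (p : Fin m → K[X]) : Prop :=
  ∃ i : Fin m, IsCriticalIndex n p i ∧ (p i).Monic

/-- `p` is reduced with respect to `q`: at the critical index `j` of `q` we have
`deg p_j < deg q_j`. -/
def ReducedWrt {K : Type*} [Semiring K] {m : ℕ} (n : Fin m → ℕ) (p q : Fin m → K[X]) : Prop :=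
  ∀ j : Fin m, IsCriticalIndex n q j → (p j).degree < (q j).degree

/-- A sequence of polynomial vectors is sorted if for `r < s` either the defect of `P r`
is strictly larger than that of `P s`, or the defects agree and the critical index of
`P r` is smaller than that of `P s`. -/
def IsSortedSeq {K : Type*} [Semiring K] {m : ℕ} (n : Fin m → ℕ)
    (P : Fin m → Fin m → K[X]) : Prop :=
  ∀ r s : Fin m, r < s →
    defect n (P s) < defect n (P r) ∨
      (defect n (P r) = defect n (P s) ∧
        ∀ i j : Fin m, IsCriticalIndex n (P r) i → IsCriticalIndex n (P s) j → i < j)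

/-- A sequence of polynomial vectors is normalised if it is sorted, pairwise reduced,
and all its members are normalised. -/
def IsNormalisedSeq {K : Type*} [Semiring K] {m : ℕ} (n : Fin m → ℕ)
    (P : Fin m → Fin m → K[X]) : Prop :=
  IsSortedSeq n P ∧ (∀ r s : Fin m, r ≠ s → ReducedWrt n (P r) (P s)) ∧
    ∀ r, IsNormalisedVec n (P r)

/-- `P` is a σ-basis of the Hermite–Padé interpolation problem given by `f`, `n` and `σ`:
every member is a solution, every solution `q` has a unique representation
`q = Σ_r α_r • P_r`, and in this representation `defect q ≤ defect (P r) - deg (α r)`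
(written additively as `defect q + deg (α r) ≤ defect (P r)`) whenever `α r ≠ 0`. -/
def IsSigmaBasis {K : Type*} [CommRing K] {m : ℕ} (f : Fin m → PowerSeries K)
    (n : Fin m → ℕ) (σ : ℕ) (P : Fin m → Fin m → K[X]) : Prop :=
  (∀ r, IsSolution f σ (P r)) ∧
    ∀ q : Fin m → K[X], IsSolution f σ q →
      (∃! α : Fin m → K[X], ∀ i, q i = ∑ r, α r * P r i) ∧
      ∀ α : Fin m → K[X], (∀ i, q i = ∑ r, α r * P r i) →
        ∀ r, α r ≠ 0 →
          defect n q + (((α r).natDegree : ℤ) : WithTop ℤ) ≤ defect n (P r)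

section DT
variable {R : Type*} [CommRing R] [IsDomain R]

lemma dt_zero (ni : ℕ) : defectTerm ni (0 : R[X]) = ⊤ := by
  simp [defectTerm]

lemma dt_of_ne {p : R[X]} (hp : p ≠ 0) (ni : ℕ) :
    defectTerm ni p = (((ni : ℤ) - p.natDegree : ℤ) : WithTop ℤ) := by
  rw [defectTerm, degree_eq_natDegree hp]; rfl

lemma dt_ne_top {p : R[X]} (hp : p ≠ 0) (ni : ℕ) : defectTerm ni p ≠ ⊤ := by
  rw [dt_of_ne hp]; exact WithTop.coe_ne_top

lemma ne_zero_of_dt {p : R[X]} {ni : ℕ} {c : ℤ} (h : defectTerm ni p = (c : WithTop ℤ)) :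
    p ≠ 0 := by
  rintro rfl; rw [dt_zero] at h; exact (WithTop.coe_ne_top h.symm)

lemma coe_lt_iff_add_one_le {d : ℤ} {x : WithTop ℤ} :
    (d : WithTop ℤ) < x ↔ ((d + 1 : ℤ) : WithTop ℤ) ≤ x := by
  cases x with
  | top => simp
  | coe e => rw [WithTop.coe_lt_coe, WithTop.coe_le_coe]; omega

lemma dt_mul_ge {ni : ℕ} {γ p : R[X]} {c : ℤ} (h : (c : WithTop ℤ) ≤ defectTerm ni p) :
    ((c - γ.natDegree : ℤ) : WithTop ℤ) ≤ defectTerm ni (γ * p) := by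
  rcases eq_or_ne γ 0 with rfl | hγ
  · simp [dt_zero]
  rcases eq_or_ne p 0 with rfl | hp
  · simp [dt_zero]
  rw [dt_of_ne hp] at h
  rw [dt_of_ne (mul_ne_zero hγ hp), natDegree_mul hγ hp]
  have := WithTop.coe_le_coe.mp h
  exact WithTop.coe_le_coe.mpr (by push_cast; omega)

lemma dt_mul_eq {ni : ℕ} {γ p : R[X]} (hγ : γ ≠ 0) (hp : p ≠ 0) {c : ℤ}
    (h : defectTerm ni p = (c : WithTop ℤ)) :
    defectTerm ni (γ * p) = ((c - γ.natDegree : ℤ) : WithTop ℤ) := by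
  rw [dt_of_ne hp] at h
  rw [dt_of_ne (mul_ne_zero hγ hp), natDegree_mul hγ hp]
  have := WithTop.coe_inj.mp h
  exact WithTop.coe_inj.mpr (by push_cast at this ⊢; omega)

lemma dt_add_ge {ni : ℕ} {p q : R[X]} {c : ℤ} (hp : (c : WithTop ℤ) ≤ defectTerm ni p)
    (hq : (c : WithTop ℤ) ≤ defectTerm ni q) :
    (c : WithTop ℤ) ≤ defectTerm ni (p + q) := by
  rcases eq_or_ne p 0 with rfl | hp0
  · simpa using hq
  rcases eq_or_ne q 0 with rfl | hq0
  · simpa using hp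
  rcases eq_or_ne (p + q) 0 with h0 | h0
  · rw [h0, dt_zero]; exact le_top
  rw [dt_of_ne hp0] at hp; rw [dt_of_ne hq0] at hq
  rw [dt_of_ne h0]
  have h1 := WithTop.coe_le_coe.mp hp
  have h2 := WithTop.coe_le_coe.mp hq
  have h3 : (p + q).natDegree ≤ max p.natDegree q.natDegree := natDegree_add_le p q
  refine WithTop.coe_le_coe.mpr ?_
  rcases le_total p.natDegree q.natDegree with h | h <;>
    [rw [max_eq_right h] at h3; rw [max_eq_left h] at h3] <;> push_cast <;> omega

lemma dt_sum_ge {ni : ℕ} {ι : Type*} {s : Finset ι} {f : ι → R[X]} {c : ℤ}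
    (h : ∀ i ∈ s, (c : WithTop ℤ) ≤ defectTerm ni (f i)) :
    (c : WithTop ℤ) ≤ defectTerm ni (∑ i ∈ s, f i) := by
  induction s using Finset.cons_induction with
  | empty => rw [Finset.sum_empty, dt_zero]; exact le_top
  | cons a s ha ih =>
      rw [Finset.sum_cons]
      exact dt_add_ge (h a (Finset.mem_cons_self a s))
        (ih fun i hi => h i (Finset.mem_cons_of_mem hi))

lemma dt_lt_of_degree_lt {ni : ℕ} {p q : R[X]} {c : ℤ}
    (hq : defectTerm ni q = (c : WithTop ℤ)) (h : p.degree < q.degree) :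
    ((c + 1 : ℤ) : WithTop ℤ) ≤ defectTerm ni p := by
  rcases eq_or_ne p 0 with rfl | hp
  · rw [dt_zero]; exact le_top
  have hq0 : q ≠ 0 := ne_zero_of_dt hq
  have hlt := natDegree_lt_natDegree hp h
  rw [dt_of_ne hq0] at hq
  have := WithTop.coe_inj.mp hq
  rw [dt_of_ne hp]
  exact WithTop.coe_le_coe.mpr (by push_cast at this ⊢; omega)

lemma dt_add_eq {ni : ℕ} {p q : R[X]} {c : ℤ} (hp : defectTerm ni p = (c : WithTop ℤ))
    (hq : ((c + 1 : ℤ) : WithTop ℤ) ≤ defectTerm ni q) :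
    defectTerm ni (p + q) = (c : WithTop ℤ) := by
  have hp0 : p ≠ 0 := ne_zero_of_dt hp
  rcases eq_or_ne q 0 with rfl | hq0
  · simpa using hp
  rw [dt_of_ne hp0] at hp
  rw [dt_of_ne hq0] at hq
  have h1 := WithTop.coe_inj.mp hp
  have h2 := WithTop.coe_le_coe.mp hq
  have hdeg : q.degree < p.degree := degree_lt_degree (by omega)
  have h3 : (p + q).degree = p.degree := degree_add_eq_left_of_degree_lt hdeg
  have h4 : p + q ≠ 0 := by
    intro h0; rw [h0, degree_zero] at h3
    exact hp0 (degree_eq_bot.mp h3.symm)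
  rw [dt_of_ne h4, natDegree_eq_of_degree_eq h3]
  exact WithTop.coe_inj.mpr h1

lemma dt_neg {ni : ℕ} (p : R[X]) : defectTerm ni (-p) = defectTerm ni p := by
  rw [defectTerm, defectTerm, degree_neg]

lemma dt_degree_eq {ni : ℕ} {p q : R[X]} (hp : p ≠ 0) (hq : q ≠ 0)
    (h : defectTerm ni p = defectTerm ni q) : p.degree = q.degree := by
  rw [dt_of_ne hp, dt_of_ne hq] at h
  have := WithTop.coe_inj.mp h
  have h2 : p.natDegree = q.natDegree := by omega
  rw [degree_eq_natDegree hp, degree_eq_natDegree hq, h2]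

end DT

section Defect
variable {R : Type*} [CommRing R] [IsDomain R] {m : ℕ} {n : Fin m → ℕ}

lemma defect_le_dt (n : Fin m → ℕ) (p : Fin m → R[X]) (i : Fin m) :
    defect n p ≤ defectTerm (n i) (p i) :=
  Finset.inf_le (Finset.mem_univ i)

lemma le_defect {p : Fin m → R[X]} {c : WithTop ℤ}
    (h : ∀ i, c ≤ defectTerm (n i) (p i)) : c ≤ defect n p :=
  Finset.le_inf fun i _ => h i

lemma exists_crit {p : Fin m → R[X]} (hp : ∃ i, p i ≠ 0) :
    ∃ i, IsCriticalIndex n p i := by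
  have hne : (Finset.univ.filter fun i => defectTerm (n i) (p i) = defect n p).Nonempty := by
    obtain ⟨i0, _⟩ := hp
    obtain ⟨i, _, hi⟩ := Finset.exists_mem_eq_inf Finset.univ ⟨i0, Finset.mem_univ i0⟩
      (fun i => defectTerm (n i) (p i))
    exact ⟨i, Finset.mem_filter.mpr ⟨Finset.mem_univ i, hi.symm⟩⟩
  set F := Finset.univ.filter fun i => defectTerm (n i) (p i) = defect n p with hF
  refine ⟨F.min' hne, (Finset.mem_filter.mp (F.min'_mem hne)).2, fun j hj hdj => ?_⟩
  have : j ∈ F := Finset.mem_filter.mpr ⟨Finset.mem_univ j, hdj⟩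
  exact absurd (F.min'_le j this) (not_le.mpr hj)

lemma crit_uniq {p : Fin m → R[X]} {i i' : Fin m} (h1 : IsCriticalIndex n p i)
    (h2 : IsCriticalIndex n p i') : i = i' := by
  rcases lt_trichotomy i i' with h | h | h
  · exact absurd h1.1 (h2.2 i h)
  · exact h
  · exact absurd h2.1 (h1.2 i' h)

end Defect

section Key
variable {R : Type*} [CommRing R] [IsDomain R] {m : ℕ}

lemma keyL (n : Fin m → ℕ) (P : Fin m → Fin m → R[X])
    (δ : Fin m → ℤ) (j : Fin m → Fin m)
    (hδ : ∀ r, defect n (P r) = ((δ r : ℤ) : WithTop ℤ))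
    (hj : ∀ r, IsCriticalIndex n (P r) (j r))
    (hanti : ∀ r s : Fin m, r ≤ s → δ s ≤ δ r)
    (hjm : ∀ r s : Fin m, r < s → δ r = δ s → j r < j s)
    (hred : ∀ r s : Fin m, r ≠ s → (P r (j s)).degree < (P s (j s)).degree)
    (γ : Fin m → R[X]) (hγ : ∃ r, γ r ≠ 0) :
    ∃ (μ : ℤ) (t : Fin m), γ t ≠ 0 ∧ δ t - ((γ t).natDegree : ℤ) = μ ∧
      (∀ r, γ r ≠ 0 → μ ≤ δ r - ((γ r).natDegree : ℤ)) ∧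
      (∀ r, γ r ≠ 0 → δ r - ((γ r).natDegree : ℤ) = μ → t ≤ r) ∧
      (∀ i, (μ : WithTop ℤ) ≤ defectTerm (n i) (∑ r, γ r * P r i)) ∧
      defectTerm (n (j t)) (∑ r, γ r * P r (j t)) = (μ : WithTop ℤ) ∧
      ((∀ r, γ r ≠ 0 → δ r - ((γ r).natDegree : ℤ) = μ → δ r = δ t) →
        ∀ i, i < j t → (μ : WithTop ℤ) < defectTerm (n i) (∑ r, γ r * P r i)) := by
  classical
  have hdtj : ∀ r, defectTerm (n (j r)) (P r (j r)) = ((δ r : ℤ) : WithTop ℤ) := fun r => by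
    rw [(hj r).1, hδ r]
  have hPjne : ∀ r, P r (j r) ≠ 0 := fun r => ne_zero_of_dt (hdtj r)
  have hdtge : ∀ r i, ((δ r : ℤ) : WithTop ℤ) ≤ defectTerm (n i) (P r i) := fun r i => by
    rw [← hδ r]; exact defect_le_dt n (P r) i
  have hdtlt : ∀ r i, i < j r → ((δ r + 1 : ℤ) : WithTop ℤ) ≤ defectTerm (n i) (P r i) := by
    intro r i hi
    refine coe_lt_iff_add_one_le.mp ?_
    have h1 := defect_le_dt n (P r) i
    have h2 := (hj r).2 i hi
    rw [hδ r] at h1 h2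
    exact lt_of_le_of_ne h1 fun h => h2 h.symm
  set ν : Fin m → ℤ := fun r => δ r - ((γ r).natDegree : ℤ) with hν
  set S := Finset.univ.filter (fun r => γ r ≠ 0) with hS
  have hSne : S.Nonempty := ⟨hγ.choose, by simp [hS, hγ.choose_spec]⟩
  set μ := S.inf' hSne ν with hμ
  have hμle : ∀ r, γ r ≠ 0 → μ ≤ ν r := fun r hr => Finset.inf'_le ν (by simp [hS, hr])
  set T := S.filter (fun r => ν r = μ) with hT
  have hTne : T.Nonempty := by
    obtain ⟨r, hrS, hre⟩ := Finset.exists_mem_eq_inf' hSne ν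
    exact ⟨r, by simp only [hT, Finset.mem_filter]; exact ⟨hrS, hre.symm⟩⟩
  set t := T.min' hTne with ht
  have htT := T.min'_mem hTne
  simp only [hT, hS, Finset.mem_filter, Finset.mem_univ, true_and] at htT
  have htγ : γ t ≠ 0 := htT.1
  have htν : ν t = μ := htT.2
  have htle : ∀ r, γ r ≠ 0 → ν r = μ → t ≤ r := fun r h1 h2 =>
    T.min'_le r (by simp only [hT, hS, Finset.mem_filter, Finset.mem_univ, true_and]
                    exact ⟨h1, h2⟩)
  have hka : ∀ i, (μ : WithTop ℤ) ≤ defectTerm (n i) (∑ r, γ r * P r i) := by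
    intro i
    refine dt_sum_ge fun r _ => ?_
    rcases eq_or_ne (γ r) 0 with h0 | h0
    · rw [h0, zero_mul, dt_zero]; exact le_top
    · refine le_trans (WithTop.coe_le_coe.mpr ?_) (dt_mul_ge (γ := γ r) (hdtge r i))
      have := hμle r h0
      simp only [hν] at this
      omega
  have hkb : defectTerm (n (j t)) (∑ r, γ r * P r (j t)) = (μ : WithTop ℤ) := by
    rw [← Finset.add_sum_erase _ _ (Finset.mem_univ t)]
    refine dt_add_eq ?_ ?_
    · rw [dt_mul_eq htγ (hPjne t) (hdtj t)]
      exact WithTop.coe_inj.mpr (by simp only [hν] at htν; omega)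
    · refine dt_sum_ge fun r hr => ?_
      have hrt : r ≠ t := (Finset.mem_erase.mp hr).1
      rcases eq_or_ne (γ r) 0 with h0 | h0
      · rw [h0, zero_mul, dt_zero]; exact le_top
      rcases eq_or_ne (ν r) μ with hνr | hνr
      · have htr : t < r := lt_of_le_of_ne (htle r h0 hνr) (Ne.symm hrt)
        have hδr : δ r ≤ δ t := hanti t r (le_of_lt htr)
        have hr1 : ((δ t + 1 : ℤ) : WithTop ℤ) ≤ defectTerm (n (j t)) (P r (j t)) :=
          dt_lt_of_degree_lt (hdtj t) (hred r t hrt)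
        refine le_trans (WithTop.coe_le_coe.mpr ?_) (dt_mul_ge (γ := γ r) hr1)
        simp only [hν] at hνr
        omega
      · have hge : μ + 1 ≤ ν r := by have := hμle r h0; omega
        refine le_trans (WithTop.coe_le_coe.mpr ?_) (dt_mul_ge (γ := γ r) (hdtge r (j t)))
        simp only [hν] at hge
        omega
  refine ⟨μ, t, htγ, htν, fun r h => hμle r h, htle, hka, hkb, ?_⟩
  intro hblk i hi
  refine coe_lt_iff_add_one_le.mpr (dt_sum_ge fun r _ => ?_)
  rcases eq_or_ne (γ r) 0 with h0 | h0
  · rw [h0, zero_mul, dt_zero]; exact le_top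
  rcases eq_or_ne (ν r) μ with hνr | hνr
  · have hδrt : δ r = δ t := hblk r h0 hνr
    rcases eq_or_ne r t with heq | hrt
    · have hij : i < j r := by rw [heq]; exact hi
      refine le_trans (WithTop.coe_le_coe.mpr ?_) (dt_mul_ge (γ := γ r) (hdtlt r i hij))
      simp only [hν] at hνr
      omega
    · have htr : t < r := lt_of_le_of_ne (htle r h0 hνr) (Ne.symm hrt)
      have hjtr : j t < j r := hjm t r htr hδrt.symm
      refine le_trans (WithTop.coe_le_coe.mpr ?_) (dt_mul_ge (γ := γ r) (hdtlt r i (lt_trans hi hjtr)))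
      simp only [hν] at hνr
      omega
  · have hge : μ + 1 ≤ ν r := by have := hμle r h0; omega
    refine le_trans (WithTop.coe_le_coe.mpr ?_) (dt_mul_ge (γ := γ r) (hdtge r i))
    simp only [hν] at hge
    omega

end Key

section Step
variable {R : Type*} [CommRing R] [IsDomain R] {m : ℕ}

lemma exists_perm_ne_zero {S : Type*} [CommRing S] (M : Matrix (Fin m) (Fin m) S)
    (h : M.det ≠ 0) : ∃ π : Equiv.Perm (Fin m), ∀ i, M (π i) i ≠ 0 := by
  by_contra hc; push_neg at hc
  apply h
  rw [Matrix.det_apply]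
  refine Finset.sum_eq_zero fun σ _ => ?_
  obtain ⟨i, hi⟩ := hc σ
  have hz : (∏ i : Fin m, M (σ i) i) = 0 := Finset.prod_eq_zero (Finset.mem_univ i) hi
  rw [hz, smul_zero]

lemma pigeon {a b : Fin m → ℤ} (ha : ∀ u v : Fin m, u ≤ v → a v ≤ a u)
    (hb : ∀ u v : Fin m, u ≤ v → b v ≤ b u) (π : Equiv.Perm (Fin m))
    (h : ∀ r, a (π r) ≤ b r) (k : Fin m) : a k ≤ b k := by
  have hex : ∃ r, k ≤ r ∧ π r ≤ k := by
    by_contra hc; push_neg at hc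
    have hsub : (Finset.Ici k).image π ⊆ Finset.Ioi k := by
      intro x hx
      obtain ⟨r, hr, rfl⟩ := Finset.mem_image.mp hx
      exact Finset.mem_Ioi.mpr (hc r (Finset.mem_Ici.mp hr))
    have hcard := Finset.card_le_card hsub
    rw [Finset.card_image_of_injective _ π.injective, Fin.card_Ici, Fin.card_Ioi] at hcard
    have := k.is_lt; omega
  obtain ⟨r, h1, h2⟩ := hex
  exact le_trans (ha _ _ h2) (le_trans (h r) (hb _ _ h1))

lemma stepI (n : Fin m → ℕ) (P Q : Fin m → Fin m → R[X])
    (δ : Fin m → ℤ) (jP jQ : Fin m → Fin m)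
    (hδP : ∀ r, defect n (P r) = ((δ r : ℤ) : WithTop ℤ))
    (hδQ : ∀ r, defect n (Q r) = ((δ r : ℤ) : WithTop ℤ))
    (hjP : ∀ r, IsCriticalIndex n (P r) (jP r))
    (hjQ : ∀ r, IsCriticalIndex n (Q r) (jQ r))
    (hanti : ∀ r s : Fin m, r ≤ s → δ s ≤ δ r)
    (hjmP : ∀ r s : Fin m, r < s → δ r = δ s → jP r < jP s)
    (hredP : ∀ r s : Fin m, r ≠ s → (P r (jP s)).degree < (P s (jP s)).degree)
    (hredQ : ∀ r s : Fin m, r ≠ s → (Q r (jQ s)).degree < (Q s (jQ s)).degree)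
    (A : Fin m → Fin m → R[X])
    (hArep : ∀ s i, Q s i = ∑ r, A s r * P r i)
    (hAd : ∀ s r, A s r ≠ 0 → δ s + ((A s r).natDegree : ℤ) ≤ δ r)
    (hQ0 : ∀ r, ∃ i, Q r i ≠ 0)
    {s s' : Fin m} (IH : ∀ u, u < s → P u = Q u) (hs' : δ s' = δ s) :
    ∃ t, δ t = δ s ∧ jQ s' = jP t := by
  have hγ : ∃ r, A s' r ≠ 0 := by
    by_contra hc; push_neg at hc
    obtain ⟨i, hi⟩ := hQ0 s'
    exact hi (by rw [hArep s' i]; exact Finset.sum_eq_zero fun r _ => by rw [hc r, zero_mul])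
  obtain ⟨μ, t, htγ, htν, hμle, htle, hka, hkb, hkc⟩ :=
    keyL n P δ jP hδP hjP hanti hjmP hredP (A s') hγ
  have hdef : μ = δ s' := by
    have h1 : (μ : WithTop ℤ) ≤ defect n (Q s') :=
      le_defect fun i => by rw [hArep s' i]; exact hka i
    have h2 : defect n (Q s') ≤ (μ : WithTop ℤ) := by
      have h3 := defect_le_dt n (Q s') (jP t)
      rw [hArep s' (jP t), hkb] at h3
      exact h3
    rw [hδQ s'] at h1 h2
    exact_mod_cast le_antisymm h1 h2
  have hδt : δ t = δ s := by
    have hd := hAd s' t htγ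
    have hge : δ s ≤ δ t := by omega
    rcases eq_or_lt_of_le hge with h | h
    · exact h.symm
    · exfalso
      have hts : t < s := by
        by_contra hc; push_neg at hc
        exact absurd (hanti s t hc) (by omega)
      have hPQt : P t = Q t := IH t hts
      have hst' : s' ≠ t := fun hh => by rw [hh] at hs'; omega
      have hcq : IsCriticalIndex n (Q t) (jP t) := hPQt ▸ hjP t
      have hjeq : jQ t = jP t := crit_uniq (hjQ t) hcq
      have hdts' : defectTerm (n (jP t)) (Q s' (jP t)) = (μ : WithTop ℤ) := by
        rw [hArep s' (jP t)]; exact hkb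
      have hr := hredQ s' t hst'
      rw [hjeq] at hr
      have hqt : defectTerm (n (jP t)) (Q t (jP t)) = ((δ t : ℤ) : WithTop ℤ) := by
        rw [hcq.1, hδQ t]
      have h4 := dt_lt_of_degree_lt hqt hr
      rw [hdts'] at h4
      have := WithTop.coe_le_coe.mp h4
      omega
  have hblk : ∀ r, A s' r ≠ 0 → δ r - ((A s' r).natDegree : ℤ) = μ → δ r = δ t := by
    intro r h1 h2
    have h3 := htle r h1 h2
    have h4 := hanti t r h3
    have h5 := hAd s' r h1
    omega
  have hcrit : IsCriticalIndex n (Q s') (jP t) := by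
    constructor
    · rw [hArep s' (jP t), hkb, hδQ s']
      exact WithTop.coe_inj.mpr hdef
    · intro i hi hcontra
      have h6 := hkc hblk i hi
      rw [← hArep s' i, hcontra, hδQ s'] at h6
      exact absurd (WithTop.coe_lt_coe.mp h6) (by omega)
  exact ⟨t, hδt, crit_uniq (hjQ s') hcrit⟩

end Step

/-- **Uniqueness of the normalised σ-basis.**  Over a commutative integral domain `R`,
if the solution space of a Hermite–Padé interpolation problem admits a normalised
σ-basis, then it is uniquely determined: any two normalised σ-bases coincide. -/
theorem normalised_sigma_basis_unique {R : Type*} [CommRing R] [IsDomain R] {m : ℕ}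
    (f : Fin m → PowerSeries R) (n : Fin m → ℕ) (σ : ℕ)
    (P Q : Fin m → Fin m → R[X])
    (hP0 : ∀ r, P r ≠ 0) (hQ0 : ∀ r, Q r ≠ 0)
    (hP : IsSigmaBasis f n σ P) (hQ : IsSigmaBasis f n σ Q)
    (hPn : IsNormalisedSeq n P) (hQn : IsNormalisedSeq n Q) :
    P = Q := by
  classical
  have hP0' : ∀ r, ∃ i, P r i ≠ 0 := fun r => Function.ne_iff.mp (hP0 r)
  have hQ0' : ∀ r, ∃ i, Q r i ≠ 0 := fun r => Function.ne_iff.mp (hQ0 r)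
  have hδPex : ∀ r, ∃ d : ℤ, defect n (P r) = (d : WithTop ℤ) := by
    intro r
    obtain ⟨i, hi⟩ := hP0' r
    have hne : defect n (P r) ≠ ⊤ := by
      intro htop
      have h1 := defect_le_dt n (P r) i
      rw [htop] at h1
      exact dt_ne_top hi (n i) (top_le_iff.mp h1)
    obtain ⟨d, hd⟩ := WithTop.ne_top_iff_exists.mp hne
    exact ⟨d, hd.symm⟩
  have hδQex : ∀ r, ∃ d : ℤ, defect n (Q r) = (d : WithTop ℤ) := by
    intro r
    obtain ⟨i, hi⟩ := hQ0' r
    have hne : defect n (Q r) ≠ ⊤ := by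
      intro htop
      have h1 := defect_le_dt n (Q r) i
      rw [htop] at h1
      exact dt_ne_top hi (n i) (top_le_iff.mp h1)
    obtain ⟨d, hd⟩ := WithTop.ne_top_iff_exists.mp hne
    exact ⟨d, hd.symm⟩
  choose δP hδP using hδPex
  choose δQ hδQ using hδQex
  choose jP hjP using fun r => exists_crit (n := n) (hP0' r)
  choose jQ hjQ using fun r => exists_crit (n := n) (hQ0' r)
  -- sortedness consequences
  have hantiP : ∀ r s : Fin m, r ≤ s → δP s ≤ δP r := by
    intro r s hrs
    rcases eq_or_lt_of_le hrs with rfl | h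
    · exact le_refl _
    rcases hPn.1 r s h with h1 | h1
    · rw [hδP r, hδP s] at h1; exact le_of_lt (WithTop.coe_lt_coe.mp h1)
    · rw [hδP r, hδP s] at h1; exact le_of_eq (WithTop.coe_inj.mp h1.1).symm
  have hantiQ : ∀ r s : Fin m, r ≤ s → δQ s ≤ δQ r := by
    intro r s hrs
    rcases eq_or_lt_of_le hrs with rfl | h
    · exact le_refl _
    rcases hQn.1 r s h with h1 | h1
    · rw [hδQ r, hδQ s] at h1; exact le_of_lt (WithTop.coe_lt_coe.mp h1)
    · rw [hδQ r, hδQ s] at h1; exact le_of_eq (WithTop.coe_inj.mp h1.1).symm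
  have hjmP : ∀ r s : Fin m, r < s → δP r = δP s → jP r < jP s := by
    intro r s h hd
    rcases hPn.1 r s h with h1 | h1
    · exfalso; rw [hδP r, hδP s, hd] at h1; exact lt_irrefl _ h1
    · exact h1.2 (jP r) (jP s) (hjP r) (hjP s)
  have hjmQ : ∀ r s : Fin m, r < s → δQ r = δQ s → jQ r < jQ s := by
    intro r s h hd
    rcases hQn.1 r s h with h1 | h1
    · exfalso; rw [hδQ r, hδQ s, hd] at h1; exact lt_irrefl _ h1
    · exact h1.2 (jQ r) (jQ s) (hjQ r) (hjQ s)
  have hredP : ∀ r s : Fin m, r ≠ s → (P r (jP s)).degree < (P s (jP s)).degree :=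
    fun r s h => hPn.2.1 r s h (jP s) (hjP s)
  have hredQ : ∀ r s : Fin m, r ≠ s → (Q r (jQ s)).degree < (Q s (jQ s)).degree :=
    fun r s h => hQn.2.1 r s h (jQ s) (hjQ s)
  have hmonP : ∀ r, (P r (jP r)).Monic := by
    intro r; obtain ⟨i, hc, hm⟩ := hPn.2.2 r
    exact (crit_uniq hc (hjP r)) ▸ hm
  have hmonQ : ∀ r, (Q r (jQ r)).Monic := by
    intro r; obtain ⟨i, hc, hm⟩ := hQn.2.2 r
    exact (crit_uniq hc (hjQ r)) ▸ hm
  -- representations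
  have hAex : ∀ s, ∃ α : Fin m → R[X], (∀ i, Q s i = ∑ r, α r * P r i) ∧
      ∀ r, α r ≠ 0 →
        defect n (Q s) + (((α r).natDegree : ℤ) : WithTop ℤ) ≤ defect n (P r) := by
    intro s
    obtain ⟨⟨α, hα1, _⟩, h2⟩ := hP.2 (Q s) (hQ.1 s)
    exact ⟨α, hα1, h2 α hα1⟩
  choose A hArep hAdef using hAex
  have hBex : ∀ s, ∃ β : Fin m → R[X], (∀ i, P s i = ∑ r, β r * Q r i) ∧
      ∀ r, β r ≠ 0 →
        defect n (P s) + (((β r).natDegree : ℤ) : WithTop ℤ) ≤ defect n (Q r) := by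
    intro s
    obtain ⟨⟨β, hβ1, _⟩, h2⟩ := hQ.2 (P s) (hP.1 s)
    exact ⟨β, hβ1, h2 β hβ1⟩
  choose B hBrep hBdef using hBex
  have hAd : ∀ s r, A s r ≠ 0 → δQ s + ((A s r).natDegree : ℤ) ≤ δP r := by
    intro s r h
    have h1 := hAdef s r h
    rw [hδQ s, hδP r] at h1
    exact_mod_cast h1
  have hBd : ∀ s r, B s r ≠ 0 → δP s + ((B s r).natDegree : ℤ) ≤ δQ r := by
    intro s r h
    have h1 := hBdef s r h
    rw [hδP s, hδQ r] at h1
    exact_mod_cast h1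
  -- Step 1: δP = δQ via determinants
  set MA : Matrix (Fin m) (Fin m) R[X] := Matrix.of A with hMA
  set MB : Matrix (Fin m) (Fin m) R[X] := Matrix.of B with hMB
  have hBA : MB * MA = 1 := by
    ext r t
    have h1 : ∀ i, P r i = ∑ t, (∑ u, B r u * A u t) * P t i := by
      intro i
      rw [hBrep r i]
      calc ∑ u, B r u * Q u i = ∑ u, ∑ t, B r u * (A u t * P t i) := by
            refine Finset.sum_congr rfl fun u _ => ?_
            rw [hArep u i, Finset.mul_sum]
        _ = ∑ t, ∑ u, B r u * (A u t * P t i) := Finset.sum_comm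
        _ = ∑ t, (∑ u, B r u * A u t) * P t i := by
            refine Finset.sum_congr rfl fun t _ => ?_
            rw [Finset.sum_mul]
            exact Finset.sum_congr rfl fun u _ => (mul_assoc _ _ _).symm
    have h2 : ∀ i, P r i = ∑ t, (if t = r then (1 : R[X]) else 0) * P t i := by
      intro i
      simp only [ite_mul, one_mul, zero_mul]
      rw [Finset.sum_ite_eq' Finset.univ r fun t => P t i]
      simp
    obtain ⟨α₀, _, hu⟩ := (hP.2 (P r) (hP.1 r)).1
    have h3 : (fun t => ∑ u, B r u * A u t) = fun t => if t = r then (1 : R[X]) else 0 :=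
      (hu _ h1).trans (hu _ h2).symm
    have h4 := congrFun h3 t
    simp only [Matrix.mul_apply, Matrix.one_apply, hMA, hMB, Matrix.of_apply]
    rw [h4]
    by_cases h : r = t <;> simp [h, eq_comm]
  have hdetBA : MB.det * MA.det = 1 := by rw [← Matrix.det_mul, hBA, Matrix.det_one]
  have hdetA : MA.det ≠ 0 := fun h => by
    rw [h, mul_zero] at hdetBA; exact zero_ne_one hdetBA
  have hdetB : MB.det ≠ 0 := fun h => by
    rw [h, zero_mul] at hdetBA; exact zero_ne_one hdetBA
  obtain ⟨π, hπ⟩ := exists_perm_ne_zero MA hdetA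
  obtain ⟨τ, hτ⟩ := exists_perm_ne_zero MB hdetB
  have hQP : ∀ k, δQ k ≤ δP k := by
    refine pigeon hantiQ hantiP π fun r => ?_
    have h1 := hAd (π r) r (hπ r)
    have h2 : (0 : ℤ) ≤ ((A (π r) r).natDegree : ℤ) := Int.natCast_nonneg _
    omega
  have hPQd : ∀ k, δP k ≤ δQ k := by
    refine pigeon hantiP hantiQ τ fun r => ?_
    have h1 := hBd (τ r) r (hτ r)
    have h2 : (0 : ℤ) ≤ ((B (τ r) r).natDegree : ℤ) := Int.natCast_nonneg _
    omega
  have hδeq : ∀ k, δP k = δQ k := fun k => le_antisymm (hPQd k) (hQP k)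
  have hδQ' : ∀ r, defect n (Q r) = ((δP r : ℤ) : WithTop ℤ) := fun r => by
    rw [hδQ r, hδeq r]
  have hjmQ' : ∀ r s : Fin m, r < s → δP r = δP s → jQ r < jQ s := fun r s h hd =>
    hjmQ r s h (by rw [← hδeq r, ← hδeq s]; exact hd)
  have hAd' : ∀ s r, A s r ≠ 0 → δP s + ((A s r).natDegree : ℤ) ≤ δP r := by
    intro s r h; have := hAd s r h; rw [← hδeq s] at this; exact this
  have hBd' : ∀ s r, B s r ≠ 0 → δP s + ((B s r).natDegree : ℤ) ≤ δP r := by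
    intro s r h; have := hBd s r h; rw [← hδeq r] at this; exact this
  -- main induction step
  have main : ∀ s : Fin m, (∀ u, u < s → P u = Q u) → P s = Q s := by
    intro s IH
    have hσ1 : ∀ s', δP s' = δP s → ∃ t, δP t = δP s ∧ jQ s' = jP t := fun s' h =>
      stepI n P Q δP jP jQ hδP hδQ' hjP hjQ hantiP hjmP hredP hredQ A hArep hAd' hQ0' IH h
    have hσ2 : ∀ s', δP s' = δP s → ∃ t, δP t = δP s ∧ jP s' = jQ t := fun s' h =>
      stepI n Q P δP jQ jP hδQ' hδP hjQ hjP hantiP hjmQ' hredQ hredP B hBrep hBd' hP0'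
        (fun u hu => (IH u hu).symm) h
    have claimA : ∀ s', δP s' = δP s → ∃ t, δP t = δP s ∧ jQ s' = jP t ∧ s' ≤ t := by
      by_contra hcA; push_neg at hcA
      obtain ⟨u0, hu0δ, hu0⟩ := hcA
      set F := Finset.univ.filter
        (fun s' => δP s' = δP s ∧ ∀ t, δP t = δP s → jQ s' = jP t → t < s') with hF
      have hu0F : u0 ∈ F := by
        simp only [hF, Finset.mem_filter, Finset.mem_univ, true_and]
        exact ⟨hu0δ, fun t h1 h2 => hu0 t h1 h2⟩
      have hFne : F.Nonempty := ⟨u0, hu0F⟩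
      set s₀ := F.min' hFne with hs₀def
      have hs₀ := F.min'_mem hFne
      simp only [hF, Finset.mem_filter, Finset.mem_univ, true_and] at hs₀
      obtain ⟨t, htδ, htj⟩ := hσ1 s₀ hs₀.1
      have hts₀ : t < s₀ := hs₀.2 t htδ htj
      have htF : t ∈ F := by
        simp only [hF, Finset.mem_filter, Finset.mem_univ, true_and]
        refine ⟨htδ, fun t2 h1 h2 => ?_⟩
        have hlt : jQ t < jQ s₀ := hjmQ' t s₀ hts₀ (by rw [htδ, hs₀.1])
        rw [htj] at hlt
        rw [h2] at hlt
        by_contra hc2; push_neg at hc2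
        rcases eq_or_lt_of_le hc2 with rfl | h3
        · exact lt_irrefl _ hlt
        · exact absurd (hjmP t t2 h3 (by rw [htδ, h1])) (asymm hlt)
      exact absurd (F.min'_le t htF) (not_le.mpr hts₀)
    have claimB : ∀ s', δP s' = δP s → ∃ t, δP t = δP s ∧ jP s' = jQ t ∧ s' ≤ t := by
      by_contra hcB; push_neg at hcB
      obtain ⟨u0, hu0δ, hu0⟩ := hcB
      set F := Finset.univ.filter
        (fun s' => δP s' = δP s ∧ ∀ t, δP t = δP s → jP s' = jQ t → t < s') with hF
      have hu0F : u0 ∈ F := by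
        simp only [hF, Finset.mem_filter, Finset.mem_univ, true_and]
        exact ⟨hu0δ, fun t h1 h2 => hu0 t h1 h2⟩
      have hFne : F.Nonempty := ⟨u0, hu0F⟩
      set s₀ := F.min' hFne with hs₀def
      have hs₀ := F.min'_mem hFne
      simp only [hF, Finset.mem_filter, Finset.mem_univ, true_and] at hs₀
      obtain ⟨t, htδ, htj⟩ := hσ2 s₀ hs₀.1
      have hts₀ : t < s₀ := hs₀.2 t htδ htj
      have htF : t ∈ F := by
        simp only [hF, Finset.mem_filter, Finset.mem_univ, true_and]
        refine ⟨htδ, fun t2 h1 h2 => ?_⟩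
        have hlt : jP t < jP s₀ := hjmP t s₀ hts₀ (by rw [htδ, hs₀.1])
        rw [htj] at hlt
        rw [h2] at hlt
        by_contra hc2; push_neg at hc2
        rcases eq_or_lt_of_le hc2 with rfl | h3
        · exact lt_irrefl _ hlt
        · exact absurd (hjmQ' t t2 h3 (by rw [htδ, h1])) (asymm hlt)
      exact absurd (F.min'_le t htF) (not_le.mpr hts₀)
    have hcrit_eq : ∀ s', δP s' = δP s → jQ s' = jP s' := by
      intro s' h
      obtain ⟨t, htδ, htj, hle⟩ := claimA s' h
      obtain ⟨t2, ht2δ, ht2j, hle2⟩ := claimB t htδ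
      have hjj : jQ s' = jQ t2 := by rw [htj, ht2j]
      have hs't2 : s' = t2 := by
        rcases lt_trichotomy s' t2 with h3 | h3 | h3
        · exact absurd (hjmQ' s' t2 h3 (by rw [h, ht2δ])) (by rw [hjj]; exact lt_irrefl _)
        · exact h3
        · exact absurd (hjmQ' t2 s' h3 (by rw [h, ht2δ])) (by rw [hjj]; exact lt_irrefl _)
      have : t = s' := le_antisymm (hs't2 ▸ hle2) hle
      rw [htj, this]
    -- the E = Q s - P s argument
    by_contra hnePQ
    set γ : Fin m → R[X] := fun r => A s r - (if r = s then 1 else 0) with hγdef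
    have hrepE : ∀ i, Q s i - P s i = ∑ r, γ r * P r i := by
      intro i
      simp only [hγdef, sub_mul, ite_mul, one_mul, zero_mul]
      rw [Finset.sum_sub_distrib, Finset.sum_ite_eq' Finset.univ s fun r => P r i]
      simp [hArep s i]
    have hγne : ∃ r, γ r ≠ 0 := by
      by_contra hcg; push_neg at hcg
      apply hnePQ
      funext i
      have h5 := hrepE i
      rw [Finset.sum_eq_zero fun r _ => by rw [hcg r, zero_mul]] at h5
      exact (sub_eq_zero.mp h5).symm
    have hsupp : ∀ r, γ r ≠ 0 → δP s ≤ δP r - ((γ r).natDegree : ℤ) := by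
      intro r h0
      rcases eq_or_ne r s with rfl | hrs
      · have hdeg : (γ r).natDegree = 0 := by
          rcases eq_or_ne (A r r) 0 with hA0 | hA0
          · simp [hγdef, hA0]
          · have h5 := hAd' r r hA0
            have h6 : (A r r).natDegree = 0 := by omega
            have h7 : (γ r).natDegree ≤ max (A r r).natDegree (1 : R[X]).natDegree := by
              simp only [hγdef, if_pos rfl]
              exact natDegree_sub_le _ _
            rw [h6, natDegree_one] at h7
            omega
        rw [hdeg]; omega
      · have h5 : γ r = A s r := by simp [hγdef, hrs]
        rw [h5] at h0
        have h6 := hAd' s r h0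
        rw [h5]
        omega
    obtain ⟨μ, t, htγ, htν, hμle, htle, hka, hkb, hkc⟩ :=
      keyL n P δP jP hδP hjP hantiP hjmP hredP γ hγne
    have hμs : δP s ≤ μ := by have := hsupp t htγ; omega
    have hdγ : (0 : ℤ) ≤ ((γ t).natDegree : ℤ) := Int.natCast_nonneg _
    have hts : s ≤ t := by
      by_contra hc; push_neg at hc
      have hPQt : P t = Q t := IH t hc
      have hst : s ≠ t := fun h => lt_irrefl s (h ▸ hc)
      have hcq : IsCriticalIndex n (Q t) (jP t) := hPQt ▸ hjP t
      have hqt : defectTerm (n (jP t)) (Q t (jP t)) = ((δP t : ℤ) : WithTop ℤ) := by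
        rw [hcq.1, hδQ' t]
      have hpt : defectTerm (n (jP t)) (P t (jP t)) = ((δP t : ℤ) : WithTop ℤ) := by
        rw [(hjP t).1, hδP t]
      have hjq : jQ t = jP t := crit_uniq (hjQ t) hcq
      have hr1 := hredQ s t hst
      rw [hjq] at hr1
      have hb1 := dt_lt_of_degree_lt hqt hr1
      have hb2 := dt_lt_of_degree_lt hpt (hredP s t hst)
      have hbE : ((δP t + 1 : ℤ) : WithTop ℤ) ≤
          defectTerm (n (jP t)) (Q s (jP t) - P s (jP t)) := by
        rw [sub_eq_add_neg]
        exact dt_add_ge hb1 (by rw [dt_neg]; exact hb2)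
      have hE : defectTerm (n (jP t)) (Q s (jP t) - P s (jP t)) = (μ : WithTop ℤ) := by
        rw [hrepE (jP t)]; exact hkb
      rw [hE] at hbE
      have h8 := WithTop.coe_le_coe.mp hbE
      omega
    have hδts : δP t = δP s := by
      have h4 := hantiP s t hts
      omega
    have hμeq : μ = δP s := by omega
    rcases eq_or_lt_of_le hts with hst | hst
    · -- s = t : monic cancellation
      rw [← hst] at hkb htν hδts
      have hjs : jQ s = jP s := hcrit_eq s rfl
      have hdtq : defectTerm (n (jP s)) (Q s (jP s)) = ((δP s : ℤ) : WithTop ℤ) := by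
        have h5 := (hjQ s).1
        rw [hδQ' s] at h5
        rw [← hjs]
        exact h5
      have hdtp : defectTerm (n (jP s)) (P s (jP s)) = ((δP s : ℤ) : WithTop ℤ) := by
        rw [(hjP s).1, hδP s]
      have hqmon : (Q s (jP s)).Monic := by rw [← hjs]; exact hmonQ s
      have hdegeq : (Q s (jP s)).degree = (P s (jP s)).degree :=
        dt_degree_eq (ne_zero_of_dt hdtq) (ne_zero_of_dt hdtp) (by rw [hdtq, hdtp])
      have hlc : (Q s (jP s)).leadingCoeff = (P s (jP s)).leadingCoeff := by
        rw [hqmon.leadingCoeff, (hmonP s).leadingCoeff]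
      have hsub := degree_sub_lt hdegeq (ne_zero_of_dt hdtq) hlc
      have hb := dt_lt_of_degree_lt hdtq hsub
      have hE : defectTerm (n (jP s)) (Q s (jP s) - P s (jP s)) = (μ : WithTop ℤ) := by
        rw [hrepE (jP s)]; exact hkb
      rw [hE] at hb
      have h8 := WithTop.coe_le_coe.mp hb
      omega
    · -- s < t : double reducedness
      have hstne : s ≠ t := ne_of_lt hst
      have hjq : jQ t = jP t := hcrit_eq t hδts
      have hdtq : defectTerm (n (jP t)) (Q t (jP t)) = ((δP t : ℤ) : WithTop ℤ) := by
        have h5 := (hjQ t).1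
        rw [hδQ' t] at h5
        rw [← hjq]
        exact h5
      have hdtp : defectTerm (n (jP t)) (P t (jP t)) = ((δP t : ℤ) : WithTop ℤ) := by
        rw [(hjP t).1, hδP t]
      have hr1 := hredQ s t hstne
      rw [hjq] at hr1
      have hb1 := dt_lt_of_degree_lt hdtq hr1
      have hb2 := dt_lt_of_degree_lt hdtp (hredP s t hstne)
      have hbE : ((δP t + 1 : ℤ) : WithTop ℤ) ≤
          defectTerm (n (jP t)) (Q s (jP t) - P s (jP t)) := by
        rw [sub_eq_add_neg]
        exact dt_add_ge hb1 (by rw [dt_neg]; exact hb2)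
      have hE : defectTerm (n (jP t)) (Q s (jP t) - P s (jP t)) = (μ : WithTop ℤ) := by
        rw [hrepE (jP t)]; exact hkb
      rw [hE] at hbE
      have h8 := WithTop.coe_le_coe.mp hbE
      omega
  -- conclude by strong induction
  have hall : ∀ N, ∀ s : Fin m, s.val < N → P s = Q s := by
    intro N
    induction N with
    | zero => intro s h; omega
    | succ N ih =>
        intro s h
        rcases Nat.lt_or_ge s.val N with h1 | h1
        · exact ih s h1
        · exact main s fun u hu => ih u (by have : u.val < s.val := hu; omega)
  funext r
  exact hall m r r.is_lt
end

section
/- Let K be a field. The solution space of every Hermite–Padé interpolation problem over K admits a normalised σ-basis: there exists a sequence (p₁,…,p_m) of solutions which is a σ-basis and which is sorted, reduced, and has all of its members normalised. -/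
open Polynomial

namespace HPaux

open Polynomial

variable {K : Type*} [Field K] {m : ℕ}

/-- `deg p ≤ b` with `deg 0 = -∞`, phrased over ℤ. -/
def degLE (p : K[X]) (b : ℤ) : Prop := p = 0 ∨ (p.natDegree : ℤ) ≤ b

def degLT (p : K[X]) (b : ℤ) : Prop := p = 0 ∨ (p.natDegree : ℤ) < b

lemma degLT.degLE {p : K[X]} {b : ℤ} (h : degLT p b) : degLE p b :=
  h.imp id le_of_lt

lemma degLE.mono {p : K[X]} {b b' : ℤ} (h : degLE p b) (hb : b ≤ b') : degLE p b' :=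
  h.imp id (fun h' => h'.trans hb)

lemma degLE.mono_lt {p : K[X]} {b b' : ℤ} (h : degLE p b) (hb : b < b') : degLT p b' :=
  h.imp id (fun h' => lt_of_le_of_lt h' hb)

lemma degLE_zero {b : ℤ} : degLE (0 : K[X]) b := Or.inl rfl

lemma degLE.add {p q : K[X]} {b : ℤ} (hp : degLE p b) (hq : degLE q b) :
    degLE (p + q) b := by
  rcases hp with rfl | hp
  · simpa using hq
  rcases hq with rfl | hq
  · rw [add_zero]; exact Or.inr hp
  by_cases h0 : p + q = 0
  · exact Or.inl h0
  · have h1 := Polynomial.natDegree_add_le p q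
    exact Or.inr (by omega)

lemma degLT.add {p q : K[X]} {b : ℤ} (hp : degLT p b) (hq : degLT q b) :
    degLT (p + q) b := by
  rcases hp with rfl | hp
  · simpa using hq
  rcases hq with rfl | hq
  · rw [add_zero]; exact Or.inr hp
  by_cases h0 : p + q = 0
  · exact Or.inl h0
  · have h1 := Polynomial.natDegree_add_le p q
    exact Or.inr (by omega)

lemma degLE.neg {p : K[X]} {b : ℤ} (h : degLE p b) : degLE (-p) b := by
  rcases h with rfl | h
  · simpa using degLE_zero
  · exact Or.inr (by simpa [Polynomial.natDegree_neg] using h)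

lemma degLT.neg {p : K[X]} {b : ℤ} (h : degLT p b) : degLT (-p) b := by
  rcases h with rfl | h
  · simp [degLT]
  · exact Or.inr (by simpa [Polynomial.natDegree_neg] using h)

lemma degLE.sub {p q : K[X]} {b : ℤ} (hp : degLE p b) (hq : degLE q b) :
    degLE (p - q) b := by
  rw [sub_eq_add_neg]; exact hp.add hq.neg

lemma degLT.sub {p q : K[X]} {b : ℤ} (hp : degLT p b) (hq : degLT q b) :
    degLT (p - q) b := by
  rw [sub_eq_add_neg]; exact hp.add hq.neg

lemma degLE.cxe_mul {q : K[X]} {b : ℤ} (c : K) (e : ℕ) (hq : degLE q b) :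
    degLE (C c * X ^ e * q) ((e : ℤ) + b) := by
  rcases hq with rfl | hq
  · simp [degLE]
  by_cases h0 : C c * X ^ e * q = 0
  · exact Or.inl h0
  · refine Or.inr ?_
    have h1 : (C c * X ^ e * q).natDegree ≤ (C c * X ^ e).natDegree + q.natDegree :=
      Polynomial.natDegree_mul_le
    have h2 : (C c * X ^ e).natDegree ≤ e := by
      simpa using Polynomial.natDegree_C_mul_le c (X ^ e) |>.trans (by simp)
    omega

lemma degLT.cxe_mul {q : K[X]} {b : ℤ} (c : K) (e : ℕ) (hq : degLT q b) :
    degLT (C c * X ^ e * q) ((e : ℤ) + b) := by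
  rcases hq with rfl | hq
  · simp [degLT]
  by_cases h0 : C c * X ^ e * q = 0
  · exact Or.inl h0
  · refine Or.inr ?_
    have h1 : (C c * X ^ e * q).natDegree ≤ (C c * X ^ e).natDegree + q.natDegree :=
      Polynomial.natDegree_mul_le
    have h2 : (C c * X ^ e).natDegree ≤ e := by
      simpa using Polynomial.natDegree_C_mul_le c (X ^ e) |>.trans (by simp)
    omega

/-! ### defectTerm and defect -/

lemma defectTerm_zero (ni : ℕ) : defectTerm ni (0 : K[X]) = ⊤ := by
  simp [defectTerm, Polynomial.degree_zero]

lemma defectTerm_of_ne_zero {p : K[X]} (hp : p ≠ 0) (ni : ℕ) :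
    defectTerm ni p = (((ni : ℤ) - (p.natDegree : ℤ) : ℤ) : WithTop ℤ) := by
  rw [defectTerm, Polynomial.degree_eq_natDegree hp]
  rfl

lemma defectTerm_eq_top_iff {p : K[X]} {ni : ℕ} : defectTerm ni p = ⊤ ↔ p = 0 := by
  constructor
  · intro h
    by_contra hp
    rw [defectTerm_of_ne_zero hp] at h
    exact (WithTop.coe_ne_top h)
  · rintro rfl; exact defectTerm_zero ni

lemma le_defectTerm_iff {p : K[X]} {ni : ℕ} {D : ℤ} :
    (D : WithTop ℤ) ≤ defectTerm ni p ↔ degLE p ((ni : ℤ) - D) := by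
  by_cases hp : p = 0
  · subst hp; simp [defectTerm_zero, degLE]
  · rw [defectTerm_of_ne_zero hp, WithTop.coe_le_coe, degLE]
    constructor
    · intro h; exact Or.inr (by omega)
    · rintro (rfl | h)
      · exact absurd rfl hp
      · omega

lemma lt_defectTerm_iff {p : K[X]} {ni : ℕ} {D : ℤ} :
    (D : WithTop ℤ) < defectTerm ni p ↔ degLT p ((ni : ℤ) - D) := by
  by_cases hp : p = 0
  · subst hp
    simp [defectTerm_zero, degLT, WithTop.coe_lt_top]
  · rw [defectTerm_of_ne_zero hp, WithTop.coe_lt_coe, degLT]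
    constructor
    · intro h; exact Or.inr (by omega)
    · rintro (rfl | h)
      · exact absurd rfl hp
      · omega

lemma defect_le (n : Fin m → ℕ) (q : Fin m → K[X]) (i : Fin m) :
    defect n q ≤ defectTerm (n i) (q i) :=
  Finset.inf_le (Finset.mem_univ i)

lemma le_defect_iff {n : Fin m → ℕ} {q : Fin m → K[X]} {D : ℤ} :
    (D : WithTop ℤ) ≤ defect n q ↔ ∀ i, degLE (q i) ((n i : ℤ) - D) := by
  rw [defect, Finset.le_inf_iff]
  exact ⟨fun h i => le_defectTerm_iff.mp (h i (Finset.mem_univ i)),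
    fun h i _ => le_defectTerm_iff.mpr (h i)⟩

lemma defect_eq_top_iff {n : Fin m → ℕ} {q : Fin m → K[X]} :
    defect n q = ⊤ ↔ q = 0 := by
  rw [defect, Finset.inf_eq_top_iff]
  constructor
  · intro h; funext i
    exact defectTerm_eq_top_iff.mp (h i (Finset.mem_univ i))
  · rintro rfl i _; exact defectTerm_zero _


lemma exists_criticalIndex {n : Fin m → ℕ} {q : Fin m → K[X]} (hm : 0 < m) :
    ∃ i, IsCriticalIndex n q i := by
  have hne : (Finset.univ : Finset (Fin m)).Nonempty := ⟨⟨0, hm⟩, Finset.mem_univ _⟩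
  obtain ⟨i, _, hi⟩ := Finset.exists_mem_eq_inf Finset.univ hne
    (fun i => defectTerm (n i) (q i))
  set s := Finset.univ.filter (fun i : Fin m => defectTerm (n i) (q i) = defect n q) with hs
  have hsne : s.Nonempty := ⟨i, by rw [hs, Finset.mem_filter]; exact ⟨Finset.mem_univ _, hi.symm⟩⟩
  refine ⟨s.min' hsne, ?_, ?_⟩
  · have := s.min'_mem hsne
    simpa [hs] using (Finset.mem_filter.mp this).2
  · intro j hj hcontra
    have hjs : j ∈ s := by simp [hs, hcontra]
    exact absurd (s.min'_le j hjs) (not_le.mpr hj)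

lemma criticalIndex_unique {n : Fin m → ℕ} {q : Fin m → K[X]} {i j : Fin m}
    (hi : IsCriticalIndex n q i) (hj : IsCriticalIndex n q j) : i = j := by
  rcases lt_trichotomy i j with h | h | h
  · exact absurd hi.1 (hj.2 i h)
  · exact h
  · exact absurd (hj.1) (hi.2 j h)

/-- Data extracted from a nonzero vector and its critical index. -/
lemma crit_spec {n : Fin m → ℕ} {q : Fin m → K[X]} {c : Fin m}
    (hq : q ≠ 0) (hc : IsCriticalIndex n q c) :
    q c ≠ 0 ∧
    defect n q = ((((n c : ℤ) - ((q c).natDegree : ℤ)) : ℤ) : WithTop ℤ) ∧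
    (∀ i, degLE (q i) ((n i : ℤ) - ((n c : ℤ) - ((q c).natDegree : ℤ)))) ∧
    (∀ i, i < c → degLT (q i) ((n i : ℤ) - ((n c : ℤ) - ((q c).natDegree : ℤ)))) := by
  have hqc : q c ≠ 0 := by
    intro h
    have : defect n q = ⊤ := by
      rw [← hc.1, h, defectTerm_zero]
    exact hq (defect_eq_top_iff.mp this)
  have hdef : defect n q = ((((n c : ℤ) - ((q c).natDegree : ℤ)) : ℤ) : WithTop ℤ) := by
    rw [← hc.1, defectTerm_of_ne_zero hqc]
  refine ⟨hqc, hdef, ?_, ?_⟩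
  · intro i
    have := defect_le n q i
    rw [hdef] at this
    exact le_defectTerm_iff.mp this
  · intro i hi
    have h1 := defect_le n q i
    have h2 := hc.2 i hi
    have : defect n q < defectTerm (n i) (q i) := lt_of_le_of_ne h1 (Ne.symm h2)
    rw [hdef] at this
    exact lt_defectTerm_iff.mp this

/-- Converse: build defect value and critical index from explicit degree data. -/
lemma crit_of {n : Fin m → ℕ} {q : Fin m → K[X]} {c : Fin m} {E : ℤ}
    (h1 : ∀ i, degLE (q i) ((n i : ℤ) - E))
    (h2 : ∀ i, i < c → degLT (q i) ((n i : ℤ) - E))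
    (h3 : q c ≠ 0) (h4 : ((q c).natDegree : ℤ) = (n c : ℤ) - E) :
    defect n q = (E : WithTop ℤ) ∧ IsCriticalIndex n q c := by
  have hterm : defectTerm (n c) (q c) = (E : WithTop ℤ) := by
    rw [defectTerm_of_ne_zero h3, h4]
    norm_num
  have hge : (E : WithTop ℤ) ≤ defect n q := le_defect_iff.mpr h1
  have hle : defect n q ≤ (E : WithTop ℤ) := hterm ▸ defect_le n q c
  have hdef : defect n q = (E : WithTop ℤ) := le_antisymm hle hge
  refine ⟨hdef, hterm.trans hdef.symm, ?_⟩
  intro j hj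
  have : (E : WithTop ℤ) < defectTerm (n j) (q j) := lt_defectTerm_iff.mpr (h2 j hj)
  rw [hdef]
  exact (ne_of_lt this).symm

/-! ### Solutions -/

lemma isSolution_zero (f : Fin m → PowerSeries K) (σ : ℕ) :
    IsSolution f σ (0 : Fin m → K[X]) := by
  intro k _
  simp [IsSolution]

lemma coeff_sum_eq {f : Fin m → PowerSeries K} {σ : ℕ} {p : Fin m → K[X]}
    (hp : IsSolution f σ p) (a : K[X]) {k : ℕ} (hk : k < σ) :
    PowerSeries.coeff k ((a : PowerSeries K) * ∑ i, (p i : PowerSeries K) * f i) = 0 := by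
  rw [PowerSeries.coeff_mul]
  refine Finset.sum_eq_zero fun x hx => ?_
  have hx2 : x.2 ≤ k := by
    have := Finset.HasAntidiagonal.antidiagonal.fst_le hx
    have h2 := Finset.HasAntidiagonal.mem_antidiagonal.mp hx
    omega
  rw [hp x.2 (lt_of_le_of_lt hx2 hk), mul_zero]

lemma solution_linComb {f : Fin m → PowerSeries K} {σ : ℕ} {p q : Fin m → K[X]}
    (hp : IsSolution f σ p) (hq : IsSolution f σ q) (a b : K[X]) :
    IsSolution f σ (fun i => a * p i + b * q i) := by
  intro k hk
  have hsum : (∑ i, ((a * p i + b * q i : K[X]) : PowerSeries K) * f i)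
      = (a : PowerSeries K) * (∑ i, (p i : PowerSeries K) * f i)
        + (b : PowerSeries K) * (∑ i, (q i : PowerSeries K) * f i) := by
    rw [Finset.mul_sum, Finset.mul_sum, ← Finset.sum_add_distrib]
    refine Finset.sum_congr rfl fun i _ => ?_
    push_cast [Polynomial.coe_add, Polynomial.coe_mul]
    ring
  rw [hsum, map_add, coeff_sum_eq hp a hk, coeff_sum_eq hq b hk, add_zero]

lemma solution_sub_cxe {f : Fin m → PowerSeries K} {σ : ℕ} {p q : Fin m → K[X]}
    (hp : IsSolution f σ p) (hq : IsSolution f σ q) (c : K) (e : ℕ) :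
    IsSolution f σ (fun i => p i - C c * X ^ e * q i) := by
  have := solution_linComb hp hq 1 (-(C c * X ^ e))
  simpa [sub_eq_add_neg] using this

lemma solution_single (f : Fin m → PowerSeries K) (σ : ℕ) (j : Fin m) :
    IsSolution f σ (fun i => if i = j then (X : K[X]) ^ σ else 0) := by
  intro k hk
  have hsum : (∑ i, ((if i = j then (X : K[X]) ^ σ else 0 : K[X]) : PowerSeries K) * f i)
      = (PowerSeries.X : PowerSeries K) ^ σ * f j := by
    rw [Finset.sum_eq_single j]
    · simp [Polynomial.coe_pow, Polynomial.coe_X]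
    · intro i _ hij
      simp [hij]
    · intro h; exact absurd (Finset.mem_univ j) h
  rw [hsum, PowerSeries.coeff_mul]
  refine Finset.sum_eq_zero fun x hx => ?_
  have h2 := Finset.HasAntidiagonal.mem_antidiagonal.mp hx
  have hx1 : x.1 ≤ k := by omega
  rw [PowerSeries.coeff_X_pow, if_neg (by omega), zero_mul]

/-! ### GoodAt -/

/-- `p` is a solution with defect `D` and critical index `j`, unfolded. -/
def GoodAt (f : Fin m → PowerSeries K) (n : Fin m → ℕ) (σ : ℕ) (j : Fin m) (D : ℤ)
    (p : Fin m → K[X]) : Prop :=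
  IsSolution f σ p ∧ (∀ i, degLE (p i) ((n i : ℤ) - D)) ∧
    (∀ i, i < j → degLT (p i) ((n i : ℤ) - D)) ∧
    p j ≠ 0 ∧ ((p j).natDegree : ℤ) = (n j : ℤ) - D

lemma GoodAt.crit {f : Fin m → PowerSeries K} {n : Fin m → ℕ} {σ : ℕ} {j : Fin m} {D : ℤ}
    {p : Fin m → K[X]} (h : GoodAt f n σ j D p) :
    defect n p = (D : WithTop ℤ) ∧ IsCriticalIndex n p j :=
  crit_of h.2.1 h.2.2.1 h.2.2.2.1 h.2.2.2.2

lemma goodAt_single (f : Fin m → PowerSeries K) (n : Fin m → ℕ) (σ : ℕ) (j : Fin m) :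
    GoodAt f n σ j ((n j : ℤ) - σ) (fun i => if i = j then (X : K[X]) ^ σ else 0) := by
  refine ⟨solution_single f σ j, ?_, ?_, ?_, ?_⟩
  · intro i
    by_cases hij : i = j
    · subst hij
      simp only [if_pos rfl]
      exact Or.inr (by simp)
    · simp only [if_neg hij]; exact degLE_zero
  · intro i hij
    have : i ≠ j := ne_of_lt hij
    simp only [if_neg this]
    exact Or.inl rfl
  · simp only [if_pos rfl]
    exact pow_ne_zero σ Polynomial.X_ne_zero
  · simp

lemma GoodAt.D_le {f : Fin m → PowerSeries K} {n : Fin m → ℕ} {σ : ℕ} {j : Fin m} {D : ℤ}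
    {p : Fin m → K[X]} (h : GoodAt f n σ j D p) : D ≤ (n j : ℤ) := by
  have := h.2.2.2.2
  have h0 : (0 : ℤ) ≤ ((p j).natDegree : ℤ) := Int.ofNat_nonneg _
  omega

lemma GoodAt.scale {f : Fin m → PowerSeries K} {n : Fin m → ℕ} {σ : ℕ} {j : Fin m} {D : ℤ}
    {p : Fin m → K[X]} (h : GoodAt f n σ j D p) :
    ∃ p', GoodAt f n σ j D p' ∧ (p' j).Monic := by
  set u : K := ((p j).leadingCoeff)⁻¹ with hu
  have hlc : (p j).leadingCoeff ≠ 0 := Polynomial.leadingCoeff_ne_zero.mpr h.2.2.2.1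
  have hu0 : u ≠ 0 := inv_ne_zero hlc
  refine ⟨fun i => C u * p i, ⟨?_, ?_, ?_, ?_, ?_⟩, ?_⟩
  · have := solution_linComb h.1 (isSolution_zero f σ) (C u) 0
    simpa using this
  · intro i
    have hd : degLE (C u * p i) ((0 : ℤ) + ((n i : ℤ) - D)) := by
      simpa using (h.2.1 i).cxe_mul u 0
    simpa using hd
  · intro i hij
    have hd : degLT (C u * p i) ((0 : ℤ) + ((n i : ℤ) - D)) := by
      simpa using (h.2.2.1 i hij).cxe_mul u 0
    simpa using hd
  · exact mul_ne_zero (by simpa using hu0) h.2.2.2.1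
  · rw [Polynomial.natDegree_C_mul hu0]
    exact h.2.2.2.2
  · show (C u * p j).Monic
    rw [Polynomial.Monic, Polynomial.leadingCoeff_mul, Polynomial.leadingCoeff_C]
    exact inv_mul_cancel₀ hlc

lemma degLT.mono {p : K[X]} {b b' : ℤ} (h : degLT p b) (hb : b ≤ b') : degLT p b' :=
  h.imp id (fun h' => lt_of_lt_of_le h' hb)

/-- Subtracting something of smaller degree keeps degree and leading coefficient. -/
lemma sub_small {a t : K[X]} (ha : a ≠ 0) (h : degLT t ((a.natDegree : ℤ))) :
    a - t ≠ 0 ∧ (a - t).natDegree = a.natDegree ∧ (a - t).leadingCoeff = a.leadingCoeff := by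
  have hdeg : t.degree < a.degree := by
    rcases h with rfl | h
    · rw [Polynomial.degree_zero]
      exact bot_lt_iff_ne_bot.mpr (by simpa [Polynomial.degree_eq_bot] using ha)
    · exact Polynomial.degree_lt_degree (by exact_mod_cast h)
  have h1 : (a - t).degree = a.degree := by
    rw [sub_eq_add_neg, Polynomial.degree_add_eq_left_of_degree_lt (by simpa using hdeg)]
  have h0 : a - t ≠ 0 := by
    intro hc
    rw [hc, Polynomial.degree_zero] at h1
    exact ha (Polynomial.degree_eq_bot.mp h1.symm)
  refine ⟨h0, Polynomial.natDegree_eq_of_degree_eq h1, ?_⟩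
  rw [Polynomial.leadingCoeff, Polynomial.leadingCoeff,
    Polynomial.natDegree_eq_of_degree_eq h1]
  rw [Polynomial.coeff_sub]
  have ht : t.coeff a.natDegree = 0 := by
    rcases h with rfl | h
    · simp
    · exact Polynomial.coeff_eq_zero_of_natDegree_lt (by exact_mod_cast h)
  rw [ht, sub_zero]

/-- The central reduction/division step. -/
lemma step {f : Fin m → PowerSeries K} {n : Fin m → ℕ} {σ : ℕ}
    {j s : Fin m} {E Ds : ℤ} {p q : Fin m → K[X]}
    (hsolp : IsSolution f σ p)
    (hle : ∀ i, degLE (p i) ((n i : ℤ) - E))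
    (hlt : ∀ i, i < j → degLT (p i) ((n i : ℤ) - E))
    (hq : GoodAt f n σ s Ds q) (hmq : (q s).Monic)
    (hps : p s ≠ 0) (hdeg : (q s).natDegree ≤ (p s).natDegree)
    (e : ℕ) (he : e = (p s).natDegree - (q s).natDegree) :
    IsSolution f σ (fun i => p i - C (p s).leadingCoeff * X ^ e * q i) ∧
    (∀ i, degLE (p i - C (p s).leadingCoeff * X ^ e * q i) ((n i : ℤ) - E)) ∧
    (∀ i, i < j → degLT (p i - C (p s).leadingCoeff * X ^ e * q i) ((n i : ℤ) - E)) ∧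
    (p s - C (p s).leadingCoeff * X ^ e * q s).degree < (p s).degree ∧
    (∀ i, (i < s ∨ s < j) →
      degLT (C (p s).leadingCoeff * X ^ e * q i) ((n i : ℤ) - E)) := by
  set c := (p s).leadingCoeff with hc
  have hcne : c ≠ 0 := Polynomial.leadingCoeff_ne_zero.mpr hps
  have hqs : q s ≠ 0 := hq.2.2.2.1
  have hqsdeg : ((q s).natDegree : ℤ) = (n s : ℤ) - Ds := hq.2.2.2.2
  have hps_le : ((p s).natDegree : ℤ) ≤ (n s : ℤ) - E := by
    rcases hle s with h | h
    · exact absurd h hps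
    · exact h
  have heZ : (e : ℤ) = ((p s).natDegree : ℤ) - ((q s).natDegree : ℤ) := by
    omega
  have hF1 : (e : ℤ) ≤ Ds - E := by omega
  have hF1' : s < j → (e : ℤ) < Ds - E := by
    intro hsj
    rcases hlt s hsj with h | h
    · exact absurd h hps
    · omega
  -- (v)
  have hv : ∀ i, (i < s ∨ s < j) →
      degLT (C c * X ^ e * q i) ((n i : ℤ) - E) := by
    intro i hi
    rcases hi with his | hsj
    · have := (hq.2.2.1 i his).cxe_mul c e
      exact this.mono (by omega)
    · have := (hq.2.1 i).cxe_mul c e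
      exact this.mono_lt (by have := hF1' hsj; omega)
  have hvle : ∀ i, degLE (C c * X ^ e * q i) ((n i : ℤ) - E) := by
    intro i
    have := (hq.2.1 i).cxe_mul c e
    exact this.mono (by omega)
  refine ⟨?_, ?_, ?_, ?_, hv⟩
  · exact solution_sub_cxe hsolp hq.1 c e
  · intro i
    exact (hle i).sub (hvle i)
  · intro i hij
    refine (hlt i hij).sub ?_
    by_cases his : i < s
    · exact hv i (Or.inl his)
    · exact hv i (Or.inr (lt_of_le_of_lt (not_lt.mp his) hij))
  · -- cancellation at s
    have hdegt : (C c * X ^ e * q s).degree = (p s).degree := by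
      rw [Polynomial.degree_mul, Polynomial.degree_mul, Polynomial.degree_C hcne,
        Polynomial.degree_X_pow, Polynomial.degree_eq_natDegree hqs,
        Polynomial.degree_eq_natDegree hps]
      rw [zero_add]
      norm_cast
      omega
    have hlct : (C c * X ^ e * q s).leadingCoeff = (p s).leadingCoeff := by
      rw [Polynomial.leadingCoeff_mul, Polynomial.leadingCoeff_mul,
        Polynomial.leadingCoeff_C, Polynomial.leadingCoeff_X_pow, hmq.leadingCoeff]
      simp [hc]
    exact Polynomial.degree_sub_lt hdegt.symm hps hlct.symm

attribute [local instance] Classical.propDecidable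

lemma natDeg_cxe_le (c : K) (e : ℕ) (q : K[X]) :
    (C c * X ^ e * q).natDegree ≤ e + q.natDegree := by
  have h1 : (C c * X ^ e * q).natDegree ≤ (C c * X ^ e).natDegree + q.natDegree :=
    Polynomial.natDegree_mul_le
  have h2 : (C c * X ^ e).natDegree ≤ e := by
    simpa using Polynomial.natDegree_C_mul_le c (X ^ e) |>.trans (by simp)
  omega

/-- Excess of coordinate `s` over the reduced-degree threshold. -/
noncomputable def exc (n : Fin m → ℕ) (D : Fin m → ℤ) (s : Fin m) (p : Fin m → K[X]) : ℕ :=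
  if p s = 0 then 0 else (((p s).natDegree : ℤ) - ((n s : ℤ) - D s) + 1).toNat

noncomputable def mu1 (n : Fin m → ℕ) (D : Fin m → ℤ) (j : Fin m) (p : Fin m → K[X]) : ℕ :=
  (Finset.univ.erase j).sup fun s => exc n D s p

noncomputable def mu2 (n : Fin m → ℕ) (D : Fin m → ℤ) (j : Fin m) (p : Fin m → K[X]) : ℕ :=
  ((Finset.univ.erase j).filter fun s => mu1 n D j p ≤ exc n D s p).card

noncomputable def nu (n : Fin m → ℕ) (D : Fin m → ℤ) (j : Fin m) (p : Fin m → K[X]) : ℕ :=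
  mu1 n D j p * (m + 1) + mu2 n D j p

lemma exc_eq_zero_iff {n : Fin m → ℕ} {D : Fin m → ℤ} {s : Fin m} {p : Fin m → K[X]} :
    exc n D s p = 0 ↔ degLT (p s) ((n s : ℤ) - D s) := by
  unfold exc
  by_cases h : p s = 0
  · simp [h, degLT]
  · simp only [if_neg h, degLT]
    constructor
    · intro h0
      exact Or.inr (by omega)
    · rintro (h0 | h0)
      · exact absurd h0 h
      · omega

lemma exc_le_mu1 {n : Fin m → ℕ} {D : Fin m → ℤ} {s j : Fin m} {p : Fin m → K[X]}
    (hs : s ≠ j) : exc n D s p ≤ mu1 n D j p := by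
  exact Finset.le_sup (f := fun s => exc n D s p)
    (Finset.mem_erase.mpr ⟨hs, Finset.mem_univ s⟩)

/-- The ordering governing which rows must be reduced against which. -/
def rel (D : Fin m → ℤ) (s j : Fin m) : Prop :=
  D j < D s ∨ (D s = D j ∧ j < s)

noncomputable def rankD (D : Fin m → ℤ) (j : Fin m) : ℕ :=
  (Finset.univ.filter fun s => rel D s j).card

lemma rel_trans {D : Fin m → ℤ} {a b c : Fin m} (h1 : rel D a b) (h2 : rel D b c) :
    rel D a c := by
  rcases h1 with h1 | ⟨h1, h1'⟩ <;> rcases h2 with h2 | ⟨h2, h2'⟩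
  · exact Or.inl (h2.trans h1)
  · exact Or.inl (h2 ▸ h1)
  · exact Or.inl (h1 ▸ h2)
  · exact Or.inr ⟨h1.trans h2, h2'.trans h1'⟩

lemma rel_irrefl {D : Fin m → ℤ} {a : Fin m} : ¬ rel D a a := by
  rintro (h | ⟨_, h⟩)
  · exact lt_irrefl _ h
  · exact lt_irrefl _ h

lemma rankD_lt {D : Fin m → ℤ} {s j : Fin m} (h : rel D s j) : rankD D s < rankD D j := by
  apply Finset.card_lt_card
  constructor
  · intro a ha
    rw [Finset.mem_filter] at ha ⊢
    exact ⟨ha.1, rel_trans ha.2 h⟩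
  · intro hsub
    have hs : s ∈ Finset.univ.filter fun a => rel D a j := by
      rw [Finset.mem_filter]; exact ⟨Finset.mem_univ s, h⟩
    have := hsub hs
    rw [Finset.mem_filter] at this
    exact rel_irrefl this.2

lemma reduce_inner {f : Fin m → PowerSeries K} {n : Fin m → ℕ} {σ : ℕ} (D : Fin m → ℤ)
    (hDex : ∀ j, ∃ p, GoodAt f n σ j (D j) p) (j : Fin m)
    (IH : ∀ s, rel D s j → ∃ p, GoodAt f n σ s (D s) p ∧ (p s).Monic ∧
        ∀ s', s' ≠ s → degLT (p s') ((n s' : ℤ) - D s')) :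
    ∃ p, GoodAt f n σ j (D j) p ∧ (p j).Monic ∧
      ∀ s, s ≠ j → degLT (p s) ((n s : ℤ) - D s) := by
  obtain ⟨p₀, hp₀⟩ := hDex j
  obtain ⟨p₁, hp₁, hmon₁⟩ := hp₀.scale
  suffices inner : ∀ (N : ℕ) (p : Fin m → K[X]), GoodAt f n σ j (D j) p → (p j).Monic →
      nu n D j p ≤ N → ∃ p', GoodAt f n σ j (D j) p' ∧ (p' j).Monic ∧
        ∀ s, s ≠ j → degLT (p' s) ((n s : ℤ) - D s) by
    exact inner (nu n D j p₁) p₁ hp₁ hmon₁ le_rfl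
  intro N
  induction N with
  | zero =>
    intro p hp hmon hN
    refine ⟨p, hp, hmon, fun s hs => ?_⟩
    have hle : exc n D s p ≤ mu1 n D j p := exc_le_mu1 hs
    have h0 : nu n D j p = 0 := Nat.le_zero.mp hN
    unfold nu at h0
    have h1 : mu1 n D j p * (m + 1) = 0 := by omega
    have h2 : mu1 n D j p = 0 := by
      rcases Nat.mul_eq_zero.mp h1 with h | h
      · exact h
      · omega
    exact exc_eq_zero_iff.mp (by omega)
  | succ N ihN =>
    intro p hp hmon hN
    by_cases hmu : mu1 n D j p = 0
    · refine ⟨p, hp, hmon, fun s hs => ?_⟩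
      have hle : exc n D s p ≤ mu1 n D j p := exc_le_mu1 hs
      exact exc_eq_zero_iff.mp (by omega)
    -- find the worst violating coordinate
    have hne : ((Finset.univ.erase j) : Finset (Fin m)).Nonempty := by
      rcases Finset.eq_empty_or_nonempty (Finset.univ.erase j) with hcon | h
      · exfalso; apply hmu; unfold mu1; rw [hcon, Finset.sup_empty]; rfl
      · exact h
    obtain ⟨s, hsmem, hseq⟩ :=
      Finset.exists_mem_eq_sup (Finset.univ.erase j) hne (fun s => exc n D s p)
    have hsj : s ≠ j := (Finset.mem_erase.mp hsmem).1
    have hsexc : exc n D s p = mu1 n D j p := hseq.symm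
    have hps : p s ≠ 0 := by
      intro h
      apply hmu
      rw [← hsexc]
      unfold exc
      rw [if_pos h]
    have hviol : ((n s : ℤ) - D s) ≤ ((p s).natDegree : ℤ) := by
      have h1 : exc n D s p ≠ 0 := by omega
      unfold exc at h1
      rw [if_neg hps] at h1
      omega
    -- degree bounds on p at s
    have hles : ((p s).natDegree : ℤ) ≤ (n s : ℤ) - D j := by
      rcases hp.2.1 s with h | h
      · exact absurd h hps
      · exact h
    have hlts : s < j → ((p s).natDegree : ℤ) < (n s : ℤ) - D j := by
      intro hsltj
      rcases hp.2.2.1 s hsltj with h | h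
      · exact absurd h hps
      · exact h
    have hrel : rel D s j := by
      rcases lt_trichotomy (D j) (D s) with h | h | h
      · exact Or.inl h
      · rcases lt_trichotomy s j with h' | h' | h'
        · exfalso; have := hlts h'; omega
        · exact absurd h' hsj
        · exact Or.inr ⟨h.symm, h'⟩
      · exfalso; omega
    obtain ⟨q, hq, hmq, hqred⟩ := IH s hrel
    have hqsdeg : ((q s).natDegree : ℤ) = (n s : ℤ) - D s := hq.2.2.2.2
    have hdeg : (q s).natDegree ≤ (p s).natDegree := by
      have : ((q s).natDegree : ℤ) ≤ ((p s).natDegree : ℤ) := by omega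
      exact_mod_cast this
    set e : ℕ := (p s).natDegree - (q s).natDegree with he
    set c : K := (p s).leadingCoeff with hc
    obtain ⟨hsol', hle', hlt', hdegs, hv⟩ :=
      step hp.1 hp.2.1 hp.2.2.1 hq hmq hps hdeg e he
    set p' : Fin m → K[X] := fun i => p i - C c * X ^ e * q i with hp'
    -- coordinate j is untouched in degree and leading coefficient
    have hvj : degLT (C c * X ^ e * q j) (((p j).natDegree : ℤ)) := by
      have h1 := hv j (hsj.symm.lt_or_gt)
      rw [hp.2.2.2.2]
      exact h1
    obtain ⟨hne', hnatdeg', hlc'⟩ := sub_small hp.2.2.2.1 hvj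
    have hgood' : GoodAt f n σ j (D j) p' := by
      refine ⟨hsol', hle', hlt', hne', ?_⟩
      show ((p' j).natDegree : ℤ) = (n j : ℤ) - D j
      rw [show p' j = p j - C c * X ^ e * q j from rfl, hnatdeg']
      exact hp.2.2.2.2
    have hmon' : (p' j).Monic := by
      show (p' j).leadingCoeff = 1
      rw [show p' j = p j - C c * X ^ e * q j from rfl, hlc']
      exact hmon
    -- the measure decreases
    have heZ : (e : ℤ) = ((p s).natDegree : ℤ) - ((n s : ℤ) - D s) := by
      have : (e : ℤ) = ((p s).natDegree : ℤ) - ((q s).natDegree : ℤ) := by omega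
      omega
    have hmuval : (mu1 n D j p : ℤ) = ((p s).natDegree : ℤ) - ((n s : ℤ) - D s) + 1 := by
      rw [← hsexc]
      unfold exc
      rw [if_neg hps]
      omega
    have hM1 : exc n D s p' ≤ mu1 n D j p - 1 := by
      by_cases h0 : p' s = 0
      · unfold exc; rw [if_pos h0]; omega
      · have hlt1 : (p' s).natDegree < (p s).natDegree :=
          Polynomial.natDegree_lt_natDegree h0 hdegs
        unfold exc
        rw [if_neg h0]
        omega
    have hM2 : ∀ s', s' ≠ s → s' ≠ j → exc n D s' p' ≤ max (exc n D s' p) (mu1 n D j p - 1) := by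
      intro s' hs's hs'j
      by_cases hqz : q s' = 0
      · have : p' s' = p s' := by
          show p s' - C c * X ^ e * q s' = p s'
          rw [hqz, mul_zero, sub_zero]
        unfold exc
        rw [this]
        exact le_max_left _ _
      · have hqb : ((q s').natDegree : ℤ) ≤ ((n s' : ℤ) - D s') - 1 := by
          rcases hqred s' hs's with h | h
          · exact absurd h hqz
          · omega
        have hth : (1 : ℤ) ≤ (n s' : ℤ) - D s' := by
          have : (0 : ℤ) ≤ ((q s').natDegree : ℤ) := Int.ofNat_nonneg _
          omega
        by_cases h0 : p' s' = 0
        · unfold exc; rw [if_pos h0]; exact le_max_of_le_right (by omega)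
        · have hsub : (p' s').natDegree ≤ max (p s').natDegree (C c * X ^ e * q s').natDegree := by
            exact Polynomial.natDegree_sub_le _ _
          have hcxe : (C c * X ^ e * q s').natDegree ≤ e + (q s').natDegree :=
            natDeg_cxe_le c e (q s')
          unfold exc
          rw [if_neg h0]
          by_cases hpz : p s' = 0
          · rw [if_pos hpz]
            rw [hpz] at hsub
            simp only [Polynomial.natDegree_zero, max_eq_right (Nat.zero_le _)] at hsub
            refine le_max_of_le_right ?_
            omega
          · rw [if_neg hpz]
            omega
    have hM3 : mu1 n D j p' ≤ mu1 n D j p := by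
      apply Finset.sup_le
      intro s' hs'
      have hs'j : s' ≠ j := (Finset.mem_erase.mp hs').1
      by_cases hss : s' = s
      · subst hss; omega
      · have := hM2 s' hss hs'j
        have hup : exc n D s' p ≤ mu1 n D j p := exc_le_mu1 hs'j
        omega
    have hM4 : nu n D j p' < nu n D j p := by
      have hmu2le : mu2 n D j p' ≤ m := by
        unfold mu2
        calc ((Finset.univ.erase j).filter fun s => mu1 n D j p' ≤ exc n D s p').card
            ≤ (Finset.univ.erase j).card := Finset.card_filter_le _ _
          _ ≤ (Finset.univ : Finset (Fin m)).card := Finset.card_le_card (Finset.erase_subset _ _)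
          _ = m := by simp
      rcases lt_or_eq_of_le hM3 with hlt1 | hmueq
      · have key : mu1 n D j p' * (m + 1) + (m + 1) ≤ mu1 n D j p * (m + 1) := by
          calc mu1 n D j p' * (m + 1) + (m + 1) = (mu1 n D j p' + 1) * (m + 1) :=
                (Nat.succ_mul _ _).symm
            _ ≤ mu1 n D j p * (m + 1) := Nat.mul_le_mul_right _ hlt1
        unfold nu
        generalize hA : mu1 n D j p' * (m + 1) = A at key ⊢
        generalize hB : mu1 n D j p * (m + 1) = B at key ⊢
        omega
      · 
        have hcard : mu2 n D j p' < mu2 n D j p := by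
          unfold mu2
          apply Finset.card_lt_card
          constructor
          · intro a ha
            rw [Finset.mem_filter] at ha ⊢
            refine ⟨ha.1, ?_⟩
            have haj : a ≠ j := (Finset.mem_erase.mp ha.1).1
            by_cases has : a = s
            · exfalso; subst has
              have := ha.2
              rw [hmueq] at this
              omega
            · have := hM2 a has haj
              have h2 := ha.2
              rw [hmueq] at h2
              omega
          · intro hsub
            have hsmem2 : s ∈ (Finset.univ.erase j).filter
                fun a => mu1 n D j p ≤ exc n D a p := by
              rw [Finset.mem_filter]
              exact ⟨hsmem, by omega⟩
            have := hsub hsmem2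
            rw [Finset.mem_filter] at this
            have := this.2
            rw [hmueq] at this
            omega
        unfold nu
        rw [hmueq]
        exact Nat.add_lt_add_left hcard _
    exact ihN p' hgood' hmon' (by omega)

/-- The main reduction: final, fully reduced representatives exist. -/
lemma reduce {f : Fin m → PowerSeries K} {n : Fin m → ℕ} {σ : ℕ} (D : Fin m → ℤ)
    (hDex : ∀ j, ∃ p, GoodAt f n σ j (D j) p) (j : Fin m) :
    ∃ p, GoodAt f n σ j (D j) p ∧ (p j).Monic ∧
      ∀ s, s ≠ j → degLT (p s) ((n s : ℤ) - D s) := by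
  suffices H : ∀ (R : ℕ) (j : Fin m), rankD D j ≤ R → ∃ p, GoodAt f n σ j (D j) p ∧
      (p j).Monic ∧ ∀ s, s ≠ j → degLT (p s) ((n s : ℤ) - D s) by
    exact H (rankD D j) j le_rfl
  intro R
  induction R with
  | zero =>
    intro j hjR
    have IH : ∀ s, rel D s j → ∃ p, GoodAt f n σ s (D s) p ∧ (p s).Monic ∧
        ∀ s', s' ≠ s → degLT (p s') ((n s' : ℤ) - D s') := by
      intro s hs
      exact absurd (rankD_lt hs) (by omega)
    exact reduce_inner D hDex j IH
  | succ R ihR =>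
    intro j hjR
    have IH : ∀ s, rel D s j → ∃ p, GoodAt f n σ s (D s) p ∧ (p s).Monic ∧
        ∀ s', s' ≠ s → degLT (p s') ((n s' : ℤ) - D s') := by
      intro s hs
      exact ihR s (by have := rankD_lt hs; omega)
    exact reduce_inner D hDex j IH

lemma fun_ne_zero_iff {q : Fin m → K[X]} : q ≠ 0 ↔ ∃ i, q i ≠ 0 := by
  constructor
  · intro h
    by_contra hc
    push_neg at hc
    exact h (funext fun i => hc i)
  · rintro ⟨i, hi⟩ rfl
    exact hi rfl

lemma rep_exists {f : Fin m → PowerSeries K} {n : Fin m → ℕ} {σ : ℕ} (D : Fin m → ℤ)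
    (hDmax : ∀ (j : Fin m) (E : ℤ) (p : Fin m → K[X]), GoodAt f n σ j E p → E ≤ D j)
    (F : Fin m → Fin m → K[X])
    (hF : ∀ j, GoodAt f n σ j (D j) (F j) ∧ (F j j).Monic)
    (q : Fin m → K[X]) (hq : IsSolution f σ q) :
    ∃ β : Fin m → K[X], ∀ i, q i = ∑ j, β j * F j i := by
  set B : ℕ := Finset.univ.sup n with hB
  suffices H : ∀ (N : ℕ) (q : Fin m → K[X]), IsSolution f σ q →
      (q ≠ 0 → ∀ c : Fin m, IsCriticalIndex n q c →
        ((B : ℤ) - ((n c : ℤ) - ((q c).natDegree : ℤ))).toNat * (m + 1) + (m - c.val) < N) →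
      ∃ β : Fin m → K[X], ∀ i, q i = ∑ j, β j * F j i by
    by_cases hq0 : q = 0
    · refine ⟨0, fun i => ?_⟩
      subst hq0
      simp
    · obtain ⟨i0, hi0⟩ := fun_ne_zero_iff.mp hq0
      obtain ⟨c, hc⟩ := exists_criticalIndex (n := n) (q := q) i0.pos
      exact H (((B : ℤ) - ((n c : ℤ) - ((q c).natDegree : ℤ))).toNat * (m + 1)
          + (m - c.val) + 1) q hq
        (fun _ c' hc' => by rw [criticalIndex_unique hc' hc]; omega)
  intro N
  induction N with
  | zero =>
    intro q hsol hm
    by_cases hq0 : q = 0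
    · exact ⟨0, fun i => by rw [hq0]; simp⟩
    · obtain ⟨i0, hi0⟩ := fun_ne_zero_iff.mp hq0
      obtain ⟨c, hc⟩ := exists_criticalIndex (n := n) (q := q) i0.pos
      exact absurd (hm hq0 c hc) (by omega)
  | succ N ihN =>
    intro q hsol hm
    by_cases hq0 : q = 0
    · exact ⟨0, fun i => by rw [hq0]; simp⟩
    obtain ⟨i0, hi0⟩ := fun_ne_zero_iff.mp hq0
    obtain ⟨c, hc⟩ := exists_criticalIndex (n := n) (q := q) i0.pos
    obtain ⟨hqc, hdef, hle, hlt⟩ := crit_spec hq0 hc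
    set E : ℤ := (n c : ℤ) - ((q c).natDegree : ℤ) with hE
    have hgood : GoodAt f n σ c E q := ⟨hsol, hle, hlt, hqc, by omega⟩
    have hED : E ≤ D c := hDmax c E q hgood
    have hFc := (hF c).1
    have hFcc : ((F c c).natDegree : ℤ) = (n c : ℤ) - D c := hFc.2.2.2.2
    have hdeg : (F c c).natDegree ≤ (q c).natDegree := by
      have : ((F c c).natDegree : ℤ) ≤ ((q c).natDegree : ℤ) := by omega
      exact_mod_cast this
    set e : ℕ := (q c).natDegree - (F c c).natDegree with he
    set c₀ : K := (q c).leadingCoeff with hc₀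
    obtain ⟨hsol', hle', hlt', hdegs, hv⟩ :=
      step hsol hle hlt hFc (hF c).2 hqc hdeg e he
    set q' : Fin m → K[X] := fun i => q i - C c₀ * X ^ e * F c i with hq'
    have hrecomb : ∀ (β' : Fin m → K[X]), (∀ i, q' i = ∑ j, β' j * F j i) →
        ∃ β : Fin m → K[X], ∀ i, q i = ∑ j, β j * F j i := by
      intro β' hβ'
      refine ⟨fun j => β' j + if j = c then C c₀ * X ^ e else 0, fun i => ?_⟩
      have h1 : q i = q' i + C c₀ * X ^ e * F c i := by
        show q i = q i - C c₀ * X ^ e * F c i + C c₀ * X ^ e * F c i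
        ring
      rw [h1, hβ' i]
      rw [Finset.sum_congr rfl (fun j _ => add_mul (β' j) _ (F j i)),
        Finset.sum_add_distrib]
      congr 1
      simp [ite_mul, Finset.sum_ite_eq']
    by_cases hq'0 : q' = 0
    · refine hrecomb 0 (fun i => ?_)
      rw [hq'0]
      simp
    -- q' is a smaller nonzero solution
    obtain ⟨i1, hi1⟩ := fun_ne_zero_iff.mp hq'0
    obtain ⟨c', hc'⟩ := exists_criticalIndex (n := n) (q := q') i1.pos
    obtain ⟨hq'c, hdef', hle'', hlt''⟩ := crit_spec hq'0 hc'
    set E' : ℤ := (n c' : ℤ) - ((q' c').natDegree : ℤ) with hE'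
    -- E ≤ E'
    have hEE' : E ≤ E' := by
      have hge : (E : WithTop ℤ) ≤ defect n q' := le_defect_iff.mpr hle'
      rw [hdef'] at hge
      exact_mod_cast hge
    -- all coordinates ≤ c are strictly small in q'
    have hltc : ∀ i, i ≤ c → degLT (q' i) ((n i : ℤ) - E) := by
      intro i hi
      rcases lt_or_eq_of_le hi with hi | hi
      · exact hlt' i hi
      · subst hi
        by_cases h0 : q' i = 0
        · exact Or.inl h0
        · refine Or.inr ?_
          have := Polynomial.natDegree_lt_natDegree h0 hdegs
          omega
    have hclt : E' = E → c < c' := by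
      intro hEeq
      by_contra hcon
      rcases hltc c' (not_lt.mp hcon) with h | h
      · exact hq'c h
      · omega
    -- measure decreases
    have hmq : ((B : ℤ) - E).toNat * (m + 1) + (m - c.val) < N + 1 := hm hq0 c hc
    have hmq' : ((B : ℤ) - E').toNat * (m + 1) + (m - c'.val) < N := by
      have hBc : n c' ≤ B := Finset.le_sup (Finset.mem_univ c')
      have hE'B : E' ≤ (B : ℤ) := by
        have : (0 : ℤ) ≤ ((q' c').natDegree : ℤ) := Int.ofNat_nonneg _
        have : ((n c' : ℤ)) ≤ (B : ℤ) := by exact_mod_cast hBc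
        omega
      rcases lt_or_eq_of_le hEE' with hlt2 | heq2
      · have ht : ((B : ℤ) - E').toNat < ((B : ℤ) - E).toNat := by omega
        have key : ((B : ℤ) - E').toNat * (m + 1) + (m + 1) ≤ ((B : ℤ) - E).toNat * (m + 1) := by
          calc ((B : ℤ) - E').toNat * (m + 1) + (m + 1)
              = (((B : ℤ) - E').toNat + 1) * (m + 1) := (Nat.succ_mul _ _).symm
            _ ≤ ((B : ℤ) - E).toNat * (m + 1) := Nat.mul_le_mul_right _ ht
        generalize hA : ((B : ℤ) - E').toNat * (m + 1) = A at key ⊢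
        generalize hB2 : ((B : ℤ) - E).toNat * (m + 1) = B2 at key hmq ⊢
        have : c'.val < m := c'.isLt
        omega
      · have hcc : c < c' := hclt heq2.symm
        rw [← heq2]
        have h1 : c.val < c'.val := hcc
        have h2 : c'.val < m := c'.isLt
        generalize hB2 : ((B : ℤ) - E).toNat * (m + 1) = B2 at hmq ⊢
        omega
    obtain ⟨β', hβ'⟩ := ihN q' hsol' (fun _ c'' hc'' => by
      rw [criticalIndex_unique hc'' hc']
      exact hmq')
    exact hrecomb β' hβ' 

lemma indep {f : Fin m → PowerSeries K} {n : Fin m → ℕ} {σ : ℕ} (D : Fin m → ℤ)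
    (F : Fin m → Fin m → K[X]) (hF : ∀ j, GoodAt f n σ j (D j) (F j))
    (β : Fin m → K[X]) (hβ : ∃ r, β r ≠ 0) :
    ∃ j₀ : Fin m, β j₀ ≠ 0 ∧
      (∀ j, β j ≠ 0 →
        (D j₀ : ℤ) - ((β j₀).natDegree : ℤ) ≤ (D j : ℤ) - ((β j).natDegree : ℤ)) ∧
      (∑ j, β j * F j j₀) ≠ 0 ∧
      ((∑ j, β j * F j j₀).natDegree : ℤ)
        = (n j₀ : ℤ) - ((D j₀ : ℤ) - ((β j₀).natDegree : ℤ)) := by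
  classical
  set g : Fin m → ℤ := fun j => D j - ((β j).natDegree : ℤ) with hg
  set supp : Finset (Fin m) := Finset.univ.filter (fun j => β j ≠ 0) with hsupp
  have hsuppne : supp.Nonempty := by
    obtain ⟨r, hr⟩ := hβ
    exact ⟨r, by simp [hsupp, hr]⟩
  set v : ℤ := (supp.image g).min' (hsuppne.image g) with hv
  have hvle : ∀ j ∈ supp, v ≤ g j := fun j hj =>
    Finset.min'_le _ _ (Finset.mem_image_of_mem g hj)
  set att : Finset (Fin m) := supp.filter (fun j => g j = v) with hatt
  have hattne : att.Nonempty := by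
    have := Finset.min'_mem (supp.image g) (hsuppne.image g)
    rw [← hv, Finset.mem_image] at this
    obtain ⟨j, hj, hjv⟩ := this
    exact ⟨j, by simp [hatt, hj, hjv]⟩
  set j₀ : Fin m := att.min' hattne with hj₀
  have hj₀att : j₀ ∈ att := Finset.min'_mem _ _
  have hj₀supp : j₀ ∈ supp := (Finset.mem_filter.mp hj₀att).1
  have hβj₀ : β j₀ ≠ 0 := (Finset.mem_filter.mp hj₀supp).2
  have hgj₀ : g j₀ = v := (Finset.mem_filter.mp hj₀att).2
  have hFj₀ := hF j₀
  have hFj₀ne : F j₀ j₀ ≠ 0 := hFj₀.2.2.2.1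
  have hFj₀deg : ((F j₀ j₀).natDegree : ℤ) = (n j₀ : ℤ) - D j₀ := hFj₀.2.2.2.2
  set T : K[X] := β j₀ * F j₀ j₀ with hT
  have hTne : T ≠ 0 := mul_ne_zero hβj₀ hFj₀ne
  have hTdeg : (T.natDegree : ℤ) = (n j₀ : ℤ) - v := by
    rw [hT, Polynomial.natDegree_mul hβj₀ hFj₀ne]
    push_cast
    simp only [hg] at hgj₀
    omega
  have hsplit : (∑ j, β j * F j j₀) = T + ∑ j ∈ Finset.univ.erase j₀, β j * F j j₀ :=
    (Finset.add_sum_erase _ _ (Finset.mem_univ j₀)).symm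
  have hRdeg : (∑ j ∈ Finset.univ.erase j₀, β j * F j j₀).degree < T.degree := by
    refine lt_of_le_of_lt (Polynomial.degree_sum_le _ _) ?_
    rw [Finset.sup_lt_iff (by
      rw [bot_lt_iff_ne_bot]
      simpa [Polynomial.degree_eq_bot] using hTne)]
    intro j hj
    have hjne : j ≠ j₀ := (Finset.mem_erase.mp hj).1
    by_cases hβj : β j = 0
    · rw [hβj, zero_mul, Polynomial.degree_zero]
      rw [bot_lt_iff_ne_bot]
      simpa [Polynomial.degree_eq_bot] using hTne
    by_cases hFj : F j j₀ = 0
    · rw [hFj, mul_zero, Polynomial.degree_zero]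
      rw [bot_lt_iff_ne_bot]
      simpa [Polynomial.degree_eq_bot] using hTne
    have hjsupp : j ∈ supp := by simp [hsupp, hβj]
    have hvgj : v ≤ g j := hvle j hjsupp
    have hFle : ((F j j₀).natDegree : ℤ) ≤ (n j₀ : ℤ) - D j := by
      rcases (hF j).2.1 j₀ with h | h
      · exact absurd h hFj
      · exact h
    have hnat : ((β j * F j j₀).natDegree : ℤ) < (T.natDegree : ℤ) := by
      rw [Polynomial.natDegree_mul hβj hFj, hTdeg]
      push_cast
      rcases lt_or_eq_of_le hvgj with hvglt | hveq
      · simp only [hg] at hvglt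
        omega
      · -- g j = v, hence j ∈ att and j₀ < j, strict bound on F j j₀
        have hjatt : j ∈ att := by simp [hatt, hjsupp, hveq.symm]
        have hj₀j : j₀ < j := lt_of_le_of_ne (Finset.min'_le _ _ hjatt) (Ne.symm hjne)
        have hFlt : ((F j j₀).natDegree : ℤ) < (n j₀ : ℤ) - D j := by
          rcases (hF j).2.2.1 j₀ hj₀j with h | h
          · exact absurd h hFj
          · exact h
        simp only [hg] at hveq
        omega
    exact Polynomial.degree_lt_degree (by exact_mod_cast hnat)
  have hSdeg : (∑ j, β j * F j j₀).degree = T.degree := by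
    rw [hsplit, add_comm, Polynomial.degree_add_eq_right_of_degree_lt hRdeg]
  have hSne : (∑ j, β j * F j j₀) ≠ 0 := by
    intro h
    rw [h, Polynomial.degree_zero] at hSdeg
    exact hTne (Polynomial.degree_eq_bot.mp hSdeg.symm)
  refine ⟨j₀, hβj₀, ?_, hSne, ?_⟩
  · intro j hj
    have := hvle j (by simp [hsupp, hj])
    simp only [hg] at this ⊢
    simp only [hg] at hgj₀
    omega
  · have := Polynomial.natDegree_eq_of_degree_eq hSdeg
    simp only [hg] at hgj₀
    omega

end HPaux

open HPaux in
/-- **Existence of a normalised σ-basis over a field.**  The solution space of every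
Hermite–Padé interpolation problem over a field admits a normalised σ-basis: a
sequence of nonzero solutions which is a σ-basis and which is sorted, pairwise
reduced, and has all of its members normalised. -/
theorem normalised_sigma_basis_exists {K : Type*} [Field K] {m : ℕ}
    (f : Fin m → PowerSeries K) (n : Fin m → ℕ) (σ : ℕ) :
    ∃ P : Fin m → Fin m → K[X],
      (∀ r, P r ≠ 0) ∧ IsSigmaBasis f n σ P ∧ IsNormalisedSeq n P := by
  classical
  -- maximal defects
  have hDall : ∀ j : Fin m, ∃ Dj : ℤ, (∃ p, GoodAt f n σ j Dj p) ∧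
      ∀ E : ℤ, (∃ p, GoodAt f n σ j E p) → E ≤ Dj := by
    intro j
    exact Int.exists_greatest_of_bdd (P := fun E => ∃ p, GoodAt f n σ j E p)
      ⟨(n j : ℤ), fun E hE => hE.elim (fun p hp => hp.D_le)⟩
      ⟨(n j : ℤ) - σ, _, goodAt_single f n σ j⟩
  choose D hDex hDmax using hDall
  have hDmax' : ∀ (j : Fin m) (E : ℤ) (p : Fin m → K[X]), GoodAt f n σ j E p → E ≤ D j :=
    fun j E p hp => hDmax j E ⟨p, hp⟩
  -- final reduced family
  choose F hFgood hFmon hFred using fun j => reduce D hDex j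
  have hcritF : ∀ j, defect n (F j) = ((D j : ℤ) : WithTop ℤ) ∧ IsCriticalIndex n (F j) j :=
    fun j => (hFgood j).crit
  -- sorting permutation
  set κ : Fin m → ℤ ×ₗ ℕ := fun j => toLex (-(D j), (j : ℕ)) with hκ
  set π : Equiv.Perm (Fin m) := Tuple.sort κ with hπ
  have hκinj : Function.Injective κ := by
    intro a b hab
    have h2 : ((a : ℕ)) = (b : ℕ) := congrArg (fun x => (ofLex x).2) hab
    exact Fin.ext h2
  have hmono : StrictMono (κ ∘ π) :=
    (Tuple.monotone_sort κ).strictMono_of_injective (hκinj.comp π.injective)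
  set P : Fin m → Fin m → K[X] := fun r => F (π r) with hP
  have hcrit : ∀ r, IsCriticalIndex n (P r) (π r) := fun r => (hcritF (π r)).2
  have hdef : ∀ r, defect n (P r) = ((D (π r) : ℤ) : WithTop ℤ) := fun r => (hcritF (π r)).1
  -- representation of solutions in the family F
  have hrepF : ∀ q : Fin m → K[X], IsSolution f σ q →
      ∃ β : Fin m → K[X], ∀ i, q i = ∑ j, β j * F j i :=
    fun q hq => rep_exists D hDmax' F (fun j => ⟨hFgood j, hFmon j⟩) q hq
  -- translation between F-sums and P-sums
  have hsum : ∀ (β : Fin m → K[X]) (i : Fin m),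
      ∑ r, β (π r) * P r i = ∑ j, β j * F j i := by
    intro β i
    exact Equiv.sum_comp π (fun j => β j * F j i)
  refine ⟨P, ?_, ⟨?_, ?_⟩, ?_, ?_, ?_⟩
  · -- nonzero
    intro r
    exact fun_ne_zero_iff.mpr ⟨π r, (hFgood (π r)).2.2.2.1⟩
  · -- each member is a solution
    intro r
    exact (hFgood (π r)).1
  · -- representation: existence, uniqueness, and the defect inequality
    intro q hq
    constructor
    · obtain ⟨β, hβ⟩ := hrepF q hq
      refine ⟨fun r => β (π r), fun i => by rw [hsum β i]; exact hβ i, ?_⟩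
      -- uniqueness
      intro α₂ hα₂
      by_contra hne
      have : ∃ r, α₂ r - β (π r) ≠ 0 := by
        by_contra hc
        push_neg at hc
        exact hne (funext fun r => sub_eq_zero.mp (hc r))
      obtain ⟨r₀, hr₀⟩ := this
      set βδ : Fin m → K[X] := fun j => α₂ (π.symm j) - β j with hβδ
      have hβδr : βδ (π r₀) ≠ 0 := by
        simpa [hβδ] using hr₀
      have hzero : ∀ i, ∑ j, βδ j * F j i = 0 := by
        intro i
        have h1 : ∑ r, (α₂ r - β (π r)) * P r i = 0 := by
          rw [Finset.sum_congr rfl (fun r _ => sub_mul (α₂ r) (β (π r)) (P r i)),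
            Finset.sum_sub_distrib, ← hα₂ i, hsum β i, ← hβ i, sub_self]
        calc ∑ j, βδ j * F j i = ∑ r, βδ (π r) * P r i := (hsum βδ i).symm
          _ = ∑ r, (α₂ r - β (π r)) * P r i := by
              refine Finset.sum_congr rfl fun r _ => ?_
              simp [hβδ]
          _ = 0 := h1
      obtain ⟨j₀, _, _, hSne, _⟩ := indep D F hFgood βδ ⟨π r₀, hβδr⟩
      exact hSne (hzero j₀)
    · -- defect inequality
      intro α hα r hαr
      set βα : Fin m → K[X] := fun j => α (π.symm j) with hβα
      have hβαr : βα (π r) ≠ 0 := by simpa [hβα] using hαr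
      have hrepα : ∀ i, q i = ∑ j, βα j * F j i := by
        intro i
        rw [← hsum βα i, hα i]
        refine Finset.sum_congr rfl fun r' _ => ?_
        simp [hβα]
      obtain ⟨j₀, hβj₀, hmin, hSne, hSdeg⟩ := indep D F hFgood βα ⟨π r, hβαr⟩
      rw [← hrepα j₀] at hSne hSdeg
      set v : ℤ := (D j₀ : ℤ) - ((βα j₀).natDegree : ℤ) with hv
      have hdq : defect n q ≤ (v : WithTop ℤ) := by
        have h1 := defect_le n q j₀
        rw [defectTerm_of_ne_zero hSne] at h1
        refine h1.trans ?_
        rw [WithTop.coe_le_coe]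
        omega
      have hvr : v + ((α r).natDegree : ℤ) ≤ D (π r) := by
        have := hmin (π r) hβαr
        have hβαval : (βα (π r)).natDegree = (α r).natDegree := by
          simp [hβα]
        rw [hβαval] at this
        omega
      calc defect n q + (((α r).natDegree : ℤ) : WithTop ℤ)
          ≤ (v : WithTop ℤ) + (((α r).natDegree : ℤ) : WithTop ℤ) :=
            add_le_add_left hdq _
        _ = ((v + ((α r).natDegree : ℤ) : ℤ) : WithTop ℤ) := by push_cast; ring
        _ ≤ ((D (π r) : ℤ) : WithTop ℤ) := WithTop.coe_le_coe.mpr hvr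
        _ = defect n (P r) := (hdef r).symm
  · -- sorted
    intro r s hrs
    have hlt := hmono hrs
    rw [Function.comp_apply, Function.comp_apply, hκ] at hlt
    rw [Prod.Lex.lt_iff] at hlt
    simp only [ofLex_toLex] at hlt
    rcases hlt with h1 | ⟨h1, h2⟩
    · left
      rw [hdef r, hdef s, WithTop.coe_lt_coe]
      omega
    · right
      have hDeq : D (π r) = D (π s) := by omega
      have hπlt : π r < π s := by
        rw [Fin.lt_def]
        exact h2
      refine ⟨by rw [hdef r, hdef s, hDeq], fun i j hi hj => ?_⟩
      rw [criticalIndex_unique hi (hcrit r), criticalIndex_unique hj (hcrit s)]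
      exact hπlt
  · -- pairwise reduced
    intro r s hrs j hj
    have hjs : j = π s := criticalIndex_unique hj (hcrit s)
    subst hjs
    have hne : π r ≠ π s := fun h => hrs (π.injective h)
    have hlt := hFred (π r) (π s) hne.symm
    have hFs : (P s) (π s) ≠ 0 := (hFgood (π s)).2.2.2.1
    have hFsdeg : (((P s) (π s)).natDegree : ℤ) = (n (π s) : ℤ) - D (π s) :=
      (hFgood (π s)).2.2.2.2
    rcases hlt with h0 | h0
    · rw [show (P r) (π s) = F (π r) (π s) from rfl, h0, Polynomial.degree_zero]
      rw [bot_lt_iff_ne_bot]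
      simpa [Polynomial.degree_eq_bot] using hFs
    · refine Polynomial.degree_lt_degree ?_
      have : ((F (π r) (π s)).natDegree : ℤ) < (((P s) (π s)).natDegree : ℤ) := by omega
      exact_mod_cast this
  · -- each member normalised
    intro r
    exact ⟨π r, hcrit r, hFmon (π r)⟩
end

section
/- Let K be a field and let P = (p₁,…,p_m) be a σ-basis of a Hermite–Padé interpolation problem over K. Let r ≠ s, let α ∈ K[x], and suppose defect(p_r) ≥ defect(p_s) + deg(α). Then the sequence obtained from P by replacing p_s with p̃ = p_s + α·p_r is again a σ-basis of the same problem, and moreover defect(p̃) = defect(p_s). -/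
open Polynomial

lemma defectTerm_zero {K : Type*} [Semiring K] (ni : ℕ) : defectTerm ni (0 : K[X]) = ⊤ := by
  simp [defectTerm, Polynomial.degree_zero]

lemma defectTerm_of_ne {K : Type*} [Semiring K] (ni : ℕ) {p : K[X]} (hp : p ≠ 0) :
    defectTerm ni p = (((ni : ℤ) - (p.natDegree : ℤ) : ℤ) : WithTop ℤ) := by
  rw [defectTerm, degree_eq_natDegree hp]; rfl

lemma min_le_defectTerm_add {K : Type*} [Semiring K] (ni : ℕ) (p q : K[X]) :
    min (defectTerm ni p) (defectTerm ni q) ≤ defectTerm ni (p + q) := by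
  by_cases hpq : p + q = 0
  · rw [hpq, defectTerm_zero]; exact le_top
  by_cases hp : p = 0
  · simp only [hp, zero_add]; exact min_le_right _ _
  by_cases hq : q = 0
  · simp only [hq, add_zero]; exact min_le_left _ _
  rcases le_max_iff.mp (natDegree_add_le p q) with h | h
  · refine (min_le_left _ _).trans ?_
    rw [defectTerm_of_ne ni hp, defectTerm_of_ne ni hpq]
    exact WithTop.coe_le_coe.mpr (by omega)
  · refine (min_le_right _ _).trans ?_
    rw [defectTerm_of_ne ni hq, defectTerm_of_ne ni hpq]
    exact WithTop.coe_le_coe.mpr (by omega)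

lemma le_defectTerm_mul {K : Type*} [Field K] (ni : ℕ) {c : K[X]} (hc : c ≠ 0) (p : K[X])
    {a : WithTop ℤ} (h : a + ((c.natDegree : ℤ) : WithTop ℤ) ≤ defectTerm ni p) :
    a ≤ defectTerm ni (c * p) := by
  by_cases hp : p = 0
  · rw [hp, mul_zero, defectTerm_zero]; exact le_top
  have hcp : c * p ≠ 0 := mul_ne_zero hc hp
  rw [defectTerm_of_ne ni hp] at h
  rw [defectTerm_of_ne ni hcp, natDegree_mul hc hp]
  induction a using WithTop.recTopCoe with
  | top => simp at h
  | coe a =>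
    rw [← WithTop.coe_add, WithTop.coe_le_coe] at h
    exact WithTop.coe_le_coe.mpr (by push_cast at h ⊢; omega)

lemma sum_shift {K : Type*} [CommRing K] {m : ℕ} {r s : Fin m} (hrs : r ≠ s) (α : K[X])
    (β : Fin m → K[X]) (Q : Fin m → K[X]) :
    ∑ t, Function.update β r (β r - α * β s) t * Function.update Q s (Q s + α * Q r) t
      = ∑ t, β t * Q t := by
  classical
  have key : (fun t => Function.update β r (β r - α * β s) t
        * Function.update Q s (Q s + α * Q r) t)
      = Function.update (Function.update (fun t => β t * Q t) r ((β r - α * β s) * Q r)) s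
          (β s * (Q s + α * Q r)) := by
    funext t
    rcases eq_or_ne t s with rfl | hts
    · simp [Function.update_of_ne (Ne.symm hrs), Function.update_of_ne hrs]
    rcases eq_or_ne t r with rfl | htr
    · simp [Function.update_of_ne hrs, Function.update_of_ne hts]
    · simp [Function.update_of_ne htr, Function.update_of_ne hts]
  rw [key, Finset.sum_update_of_mem (Finset.mem_univ s),
    Finset.sum_update_of_mem (show r ∈ Finset.univ \ {s} by simp [hrs]),
    ← Finset.add_sum_erase _ _ (Finset.mem_univ s),
    ← Finset.add_sum_erase _ (fun t => β t * Q t)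
      (show r ∈ Finset.univ.erase s by simp [hrs]),
    Finset.erase_eq, Finset.erase_eq]
  ring


lemma isSolution_combo {K : Type*} [CommRing K] {m : ℕ} {f : Fin m → PowerSeries K} {σ : ℕ}
    {p q : Fin m → K[X]} (hp : IsSolution f σ p) (hq : IsSolution f σ q) (c : K[X]) :
    IsSolution f σ (fun i => p i + c * q i) := by
  intro k hk
  have hsum : (∑ i, ((p i + c * q i : K[X]) : PowerSeries K) * f i)
      = (∑ i, (p i : PowerSeries K) * f i)
        + (c : PowerSeries K) * ∑ i, (q i : PowerSeries K) * f i := by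
    rw [Finset.mul_sum, ← Finset.sum_add_distrib]
    refine Finset.sum_congr rfl fun i _ => ?_
    push_cast
    ring
  rw [hsum, map_add, hp k hk, PowerSeries.coeff_mul, zero_add]
  refine Finset.sum_eq_zero fun x hx => ?_
  have hx' := Finset.HasAntidiagonal.mem_antidiagonal.mp hx
  rw [hq x.2 (lt_of_le_of_lt (by omega) hk), mul_zero]

lemma update_apply_pt {K : Type*} [Semiring K] {m : ℕ} (P : Fin m → Fin m → K[X]) (s : Fin m)
    (v : Fin m → K[X]) (t i : Fin m) :
    Function.update P s v t i = Function.update (fun u => P u i) s (v i) t := by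
  rcases eq_or_ne t s with rfl | h
  · simp
  · simp [h]

/-- **Elementary transformation of a σ-basis.**  Let `P` be a σ-basis of a
Hermite–Padé interpolation problem over a field `K`, let `r ≠ s` and let
`α ∈ K[x]` with `defect (P r) ≥ defect (P s) + deg α` (automatic when `α = 0`,
since then `deg α = -∞`).  Then replacing `P s` by `p̃ = P s + α • P r` again
yields a σ-basis of the same problem, and `defect p̃ = defect (P s)`. -/
theorem sigma_basis_replacement {K : Type*} [Field K] {m : ℕ}
    (f : Fin m → PowerSeries K) (n : Fin m → ℕ) (σ : ℕ)
    (P : Fin m → Fin m → K[X]) (hP : IsSigmaBasis f n σ P)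
    (r s : Fin m) (hrs : r ≠ s) (α : K[X])
    (hα : α = 0 ∨ defect n (P s) + ((α.natDegree : ℤ) : WithTop ℤ) ≤ defect n (P r)) :
    IsSigmaBasis f n σ (Function.update P s (fun i => P s i + α * P r i)) ∧
      defect n (fun i => P s i + α * P r i) = defect n (P s) := by
  classical
  by_cases hα0 : α = 0
  · subst hα0
    have hfun : (fun i => P s i + (0 : K[X]) * P r i) = P s := by funext i; simp
    rw [hfun, Function.update_eq_self]
    exact ⟨hP, rfl⟩
  have hb : defect n (P s) + ((α.natDegree : ℤ) : WithTop ℤ) ≤ defect n (P r) :=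
    hα.resolve_left hα0
  -- the new vector is a solution
  have hsol_ps : IsSolution f σ (fun i => P s i + α * P r i) :=
    isSolution_combo (hP.1 s) (hP.1 r) α
  -- defect is preserved
  have hge : defect n (P s) ≤ defect n (fun i => P s i + α * P r i) := by
    refine Finset.le_inf fun i _ => ?_
    refine le_trans (le_min ?_ ?_) (min_le_defectTerm_add (n i) _ _)
    · exact Finset.inf_le (Finset.mem_univ i)
    · exact le_defectTerm_mul (n i) hα0 _
        (hb.trans (Finset.inf_le (Finset.mem_univ i)))
  have hle : defect n (fun i => P s i + α * P r i) ≤ defect n (P s) := by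
    obtain ⟨hmem, h2⟩ := hP
    obtain ⟨-, hbound⟩ := h2 _ hsol_ps
    have hrep : ∀ i, (fun i => P s i + α * P r i) i
        = ∑ t, (fun t => if t = s then 1 else if t = r then α else 0) t * P t i := by
      intro i
      have hterm : ∀ t, (if t = s then (1 : K[X]) else if t = r then α else 0) * P t i
          = (if t = s then P s i else 0) + (if t = r then α * P r i else 0) := by
        intro t
        rcases eq_or_ne t s with rfl | hts
        · simp [Ne.symm hrs]
        rcases eq_or_ne t r with rfl | htr
        · simp [hts]
        · simp [hts, htr]
      simp only [hterm, Finset.sum_add_distrib]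
      rw [Finset.sum_ite_eq' Finset.univ s (fun _ => P s i),
        Finset.sum_ite_eq' Finset.univ r (fun _ => α * P r i)]
      simp
    have := hbound _ hrep s (by simp)
    simpa using this
  have hdef : defect n (fun i => P s i + α * P r i) = defect n (P s) := le_antisymm hle hge
  refine ⟨⟨?_, ?_⟩, hdef⟩
  · intro t
    rcases eq_or_ne t s with rfl | hts
    · rw [Function.update_self]; exact hsol_ps
    · rw [Function.update_of_ne hts]; exact hP.1 t
  intro q hq
  obtain ⟨⟨β, hβ, hβuniq⟩, hbound⟩ := hP.2 q hq
  -- key conversion between representations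
  have key : ∀ (γ : Fin m → K[X]) (i : Fin m),
      ∑ t, γ t * Function.update P s (fun i => P s i + α * P r i) t i
        = ∑ t, Function.update γ r (γ r + α * γ s) t * P t i := by
    intro γ i
    simp only [update_apply_pt]
    set β' := Function.update γ r (γ r + α * γ s) with hβ'
    have h2 : Function.update β' r (β' r - α * β' s) = γ := by
      funext t
      rcases eq_or_ne t r with rfl | h
      · simp [hβ', Function.update_of_ne (Ne.symm hrs)]
      · simp [hβ', Function.update_of_ne h]
    calc ∑ t, γ t * Function.update (fun u => P u i) s ((fun i => P s i + α * P r i) i) t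
        = ∑ t, Function.update β' r (β' r - α * β' s) t
            * Function.update (fun u => P u i) s
              ((fun u => P u i) s + α * (fun u => P u i) r) t := by rw [h2]
      _ = ∑ t, β' t * P t i := sum_shift hrs α β' (fun u => P u i)
  constructor
  · -- unique representation
    refine ⟨Function.update β r (β r - α * β s), ?_, ?_⟩
    · intro i
      have hback : Function.update (Function.update β r (β r - α * β s)) r
          (Function.update β r (β r - α * β s) r
            + α * Function.update β r (β r - α * β s) s) = β := by
        funext t
        rcases eq_or_ne t r with rfl | h
        · simp [Function.update_of_ne (Ne.symm hrs)]
        · simp [Function.update_of_ne h]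
      rw [key, hback]
      exact hβ i
    · intro γ' hγ'
      have hβ'rep : ∀ i, q i = ∑ t, Function.update γ' r (γ' r + α * γ' s) t * P t i :=
        fun i => (hγ' i).trans (key γ' i)
      have heq : Function.update γ' r (γ' r + α * γ' s) = β := hβuniq _ hβ'rep
      funext t
      rcases eq_or_ne t r with rfl | h
      · have h1 : γ' t + α * γ' s = β t := by
          rw [← heq]; simp
        have h2 : γ' s = β s := by
          rw [← heq, Function.update_of_ne (Ne.symm hrs)]
        simp only [Function.update_self]
        rw [← h1, ← h2]
        ring
      · have := congrFun heq t
        rw [Function.update_of_ne h] at this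
        rw [Function.update_of_ne h, this]
  -- defect bounds
  intro γ hγ t ht
  have hβ'rep : ∀ i, q i = ∑ u, Function.update γ r (γ r + α * γ s) u * P u i :=
    fun i => (hγ i).trans (key γ i)
  set β' := Function.update γ r (γ r + α * γ s) with hβ'def
  have hBs : β' s = γ s := Function.update_of_ne (Ne.symm hrs) _ _
  rcases eq_or_ne t s with rfl | hts
  · rw [Function.update_self, hdef]
    have hns : β' t ≠ 0 := by rwa [hBs]
    have h1 := hbound β' hβ'rep t hns
    rwa [hBs] at h1
  rw [Function.update_of_ne hts]
  rcases eq_or_ne t r with rfl | htr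
  · by_cases hγs : γ s = 0
    · have hBr : β' t = γ t := by simp [hβ'def, hγs]
      have h1 := hbound β' hβ'rep t (by rwa [hBr])
      rwa [hBr] at h1
    · have hBr : β' t = γ t + α * γ s := Function.update_self _ _ _
      have hcase : (γ t).natDegree ≤ α.natDegree + (γ s).natDegree ∨
          (β' t ≠ 0 ∧ (γ t).natDegree ≤ (β' t).natDegree) := by
        by_cases hβr : β' t = 0
        · left
          have hneg : γ t = -(α * γ s) := by
            linear_combination hBr.symm.trans hβr
          rw [hneg, natDegree_neg, natDegree_mul hα0 hγs]
        · have hsub : γ t = β' t - α * γ s := by rw [hBr]; ring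
          have hd := natDegree_sub_le (β' t) (α * γ s)
          rw [← hsub, natDegree_mul hα0 hγs] at hd
          rcases le_max_iff.mp hd with h | h
          · exact Or.inr ⟨hβr, h⟩
          · exact Or.inl h
      rcases hcase with h | ⟨hβr, h⟩
      · have h1 := hbound β' hβ'rep s (by rwa [hBs])
        rw [hBs] at h1
        calc defect n q + (((γ t).natDegree : ℤ) : WithTop ℤ)
            ≤ (defect n q + (((γ s).natDegree : ℤ) : WithTop ℤ))
              + ((α.natDegree : ℤ) : WithTop ℤ) := by
              rw [add_assoc, ← WithTop.coe_add]
              exact add_le_add_right (WithTop.coe_le_coe.mpr (by omega)) _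
          _ ≤ defect n (P s) + ((α.natDegree : ℤ) : WithTop ℤ) := add_le_add_left h1 _
          _ ≤ defect n (P t) := hb
      · have h2 := hbound β' hβ'rep t hβr
        refine le_trans ?_ h2
        exact add_le_add_right (WithTop.coe_le_coe.mpr (by exact_mod_cast h)) _
  · have hBt : β' t = γ t := Function.update_of_ne htr _ _
    have h1 := hbound β' hβ'rep t (by rwa [hBt])
    rwa [hBt] at h1
end

section
/- Let K be a field. Any two σ-bases of the same Hermite–Padé interpolation problem over K have the same multiset of defects: if (p₁,…,p_m) and (q₁,…,q_m) are σ-bases of the same problem, both indexed so that defects are weakly decreasing, then defect(p_r) = defect(q_r) for all r. -/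
open Polynomial

section Aux

open Matrix

/-- An invertible square matrix over a field cannot have a zero block with rows `r ≤ k`
and columns `s ≥ k`. -/
lemma block_zero_not_isUnit {F : Type*} [Field F] {m : ℕ} (A : Matrix (Fin m) (Fin m) F)
    (k : Fin m) (h0 : ∀ r s : Fin m, r ≤ k → k ≤ s → A r s = 0) : ¬ IsUnit A := by
  classical
  intro hA
  have hrows : LinearIndependent F (fun i => A i) :=
    Matrix.linearIndependent_rows_iff_isUnit.2 hA
  have hm : (k : ℕ) + 1 ≤ m := k.2
  set e : Fin ((k : ℕ) + 1) → Fin m := Fin.castLE hm with he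
  have hei : Function.Injective e := Fin.castLE_injective hm
  set w : Fin ((k : ℕ) + 1) → (Fin (k : ℕ) → F) :=
    fun r s => A (e r) (Fin.castLE (Nat.le_of_succ_le hm) s) with hw
  have hwli : LinearIndependent F w := by
    rw [Fintype.linearIndependent_iff]
    intro g hg
    set g' : Fin m → F := fun t => if h : (t : ℕ) < (k : ℕ) + 1 then g ⟨t, h⟩ else 0 with hg'
    have hg'e : ∀ r, g' (e r) = g r := by
      intro r
      simp only [hg', he]
      rw [dif_pos (show ((Fin.castLE hm r : Fin m) : ℕ) < (k : ℕ) + 1 from r.2)]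
      exact congrArg g (Fin.ext rfl)
    have hsum : ∑ t, g' t • (fun i => A i) t = 0 := by
      funext s
      have hs1 : (∑ t, g' t • (fun i => A i) t) s = ∑ t, g' t * A t s := by
        simp [Finset.sum_apply]
      rw [hs1]
      by_cases hs : (s : ℕ) < (k : ℕ)
      · have himg : ∀ t ∈ (Finset.univ : Finset (Fin m)),
            t ∉ Finset.image e Finset.univ → g' t * A t s = 0 := by
          intro t _ ht
          have : ¬ (t : ℕ) < (k : ℕ) + 1 := by
            intro hlt
            exact ht (Finset.mem_image.2 ⟨⟨t, hlt⟩, Finset.mem_univ _, by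
              simp [he, Fin.ext_iff]⟩)
          simp only [hg', dif_neg this, zero_mul]
        have h1 : ∑ t, g' t * A t s = ∑ t ∈ Finset.image e Finset.univ, g' t * A t s :=
          (Finset.sum_subset (Finset.subset_univ _) himg).symm
        rw [h1, Finset.sum_image (fun a _ b _ h => hei h)]
        have h2 : ∀ r : Fin ((k : ℕ) + 1), g' (e r) * A (e r) s = g r * w r ⟨s, hs⟩ := by
          intro r
          rw [hg'e]
          have hcast : Fin.castLE (Nat.le_of_succ_le hm) (⟨(s : ℕ), hs⟩ : Fin (k : ℕ)) = s :=
            Fin.ext rfl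
          simp only [hw]
          rw [hcast]
        rw [Finset.sum_congr rfl fun r _ => h2 r]
        have := congrFun hg ⟨s, hs⟩
        simpa [Finset.sum_apply] using this
      · refine Finset.sum_eq_zero fun t _ => ?_
        by_cases ht : (t : ℕ) < (k : ℕ) + 1
        · have hAz : A t s = 0 := h0 t s (Fin.le_def.mpr (Nat.lt_succ_iff.mp ht))
            (Fin.le_def.mpr (Nat.le_of_not_lt hs))
          rw [hAz, mul_zero]
        · simp only [hg', dif_neg ht, zero_mul]
    have hall := Fintype.linearIndependent_iff.1 hrows g' hsum
    intro i
    rw [← hg'e i]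
    exact hall (e i)
  have hcard := hwli.fintype_card_le_finrank
  rw [Module.finrank_fintype_fun_eq_card] at hcard
  simp [Fintype.card_fin] at hcard

/-- One inequality between the defects of two σ-bases. -/
lemma sigma_basis_defects_le {K : Type*} [Field K] {m : ℕ}
    (f : Fin m → PowerSeries K) (n : Fin m → ℕ) (σ : ℕ)
    (P Q : Fin m → Fin m → K[X])
    (hP : IsSigmaBasis f n σ P) (hQ : IsSigmaBasis f n σ Q)
    (hPdec : ∀ r s : Fin m, r ≤ s → defect n (P s) ≤ defect n (P r))
    (hQdec : ∀ r s : Fin m, r ≤ s → defect n (Q s) ≤ defect n (Q r)) :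
    ∀ k, defect n (P k) ≤ defect n (Q k) := by
  classical
  -- transition matrices
  have hrepA : ∀ r, ∃ α : Fin m → K[X], (∀ i, P r i = ∑ s, α s * Q s i) ∧
      ∀ s, α s ≠ 0 →
        defect n (P r) + (((α s).natDegree : ℤ) : WithTop ℤ) ≤ defect n (Q s) := by
    intro r
    obtain ⟨⟨α, hα, -⟩, h2⟩ := hQ.2 (P r) (hP.1 r)
    exact ⟨α, hα, h2 α hα⟩
  choose A hA hAdef using hrepA
  have hrepB : ∀ s, ∃ β : Fin m → K[X], ∀ i, Q s i = ∑ t, β t * P t i := by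
    intro s
    obtain ⟨⟨β, hβ, -⟩, -⟩ := hP.2 (Q s) (hQ.1 s)
    exact ⟨β, hβ⟩
  choose B hB using hrepB
  -- A * B = 1
  have hAB : (Matrix.of A) * (Matrix.of B) = 1 := by
    ext r t
    have h1 : ∀ i, P r i = ∑ t, (∑ s, A r s * B s t) * P t i := by
      intro i
      rw [hA r i]
      simp only [hB, Finset.mul_sum]
      rw [Finset.sum_comm]
      simp only [Finset.sum_mul, mul_assoc]
    have h2 : ∀ i, P r i = ∑ t, (fun t => if t = r then (1 : K[X]) else 0) t * P t i := by
      intro i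
      simp [Finset.sum_ite_eq']
    have huniq := (hP.2 (P r) (hP.1 r)).1
    have heq := huniq.unique h1 h2
    have := congrFun heq t
    simp only [Matrix.mul_apply, Matrix.one_apply, Matrix.of_apply]
    rw [this]
    simp [eq_comm]
  intro k
  by_contra hle
  have hlt : defect n (Q k) < defect n (P k) := lt_of_not_ge hle
  -- the forbidden zero block
  have hzero : ∀ r s : Fin m, r ≤ k → k ≤ s → A r s = 0 := by
    intro r s hr hs
    by_contra hne
    have h1 := hAdef r s hne
    have h2 : defect n (P r) ≤ defect n (P r) + (((A r s).natDegree : ℤ) : WithTop ℤ) :=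
      le_add_of_nonneg_right (by exact_mod_cast Int.natCast_nonneg _)
    have : defect n (P r) < defect n (P r) :=
      lt_of_le_of_lt (h2.trans (h1.trans (hQdec k s hs)))
        (lt_of_lt_of_le hlt (hPdec r k hr))
    exact lt_irrefl _ this
  -- pass to the fraction field
  set F := FractionRing K[X]
  set φ : K[X] →+* F := algebraMap K[X] F with hφ
  have hmap : ((Matrix.of A).map φ) * ((Matrix.of B).map φ) = 1 := by
    rw [← Matrix.map_mul, hAB, Matrix.map_one φ (map_zero φ) (map_one φ)]
  have hUnit : IsUnit ((Matrix.of A).map φ) :=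
    (Matrix.isUnit_iff_isUnit_det _).2 (Matrix.isUnit_det_of_right_inverse hmap)
  refine block_zero_not_isUnit ((Matrix.of A).map φ) k ?_ hUnit
  intro r s hr hs
  simp only [Matrix.map_apply, Matrix.of_apply]
  rw [hzero r s hr hs, map_zero]

end Aux

/-- **The multiset of defects is an invariant of the problem.**  If `P` and `Q` are
two σ-bases of the same Hermite–Padé interpolation problem over a field `K`, both
indexed so that defects are weakly decreasing, then `defect (P r) = defect (Q r)`
for all `r`. -/
theorem sigma_basis_defects_invariant {K : Type*} [Field K] {m : ℕ}
    (f : Fin m → PowerSeries K) (n : Fin m → ℕ) (σ : ℕ)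
    (P Q : Fin m → Fin m → K[X])
    (hP : IsSigmaBasis f n σ P) (hQ : IsSigmaBasis f n σ Q)
    (hPdec : ∀ r s : Fin m, r ≤ s → defect n (P s) ≤ defect n (P r))
    (hQdec : ∀ r s : Fin m, r ≤ s → defect n (Q s) ≤ defect n (Q r)) :
    ∀ r, defect n (P r) = defect n (Q r) := fun r =>
  le_antisymm (sigma_basis_defects_le f n σ P Q hP hQ hPdec hQdec r)
    (sigma_basis_defects_le f n σ Q P hQ hP hQdec hPdec r)
end

section
/- Let K be a field and let (p₁,…,p_m) be a σ-basis of a Hermite–Padé interpolation problem over K. For every integer δ, let L^σ_δ denote the set of solutions with defect strictly larger than −δ (together with the zero vector). Then L^σ_δ is a K-vector space spanned by the vectors x^j·p_r with 1 ≤ r ≤ m and 0 ≤ j < defect(p_r) + δ, and its dimension over K equals Σ_{r=1}^m max(defect(p_r) + δ, 0). -/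
open Polynomial

section AuxLemmas
open scoped Classical

lemma defectTerm_eq {K : Type*} [Semiring K] (ni : ℕ) (p : K[X]) :
    defectTerm ni p = if p = 0 then (⊤ : WithTop ℤ)
      else (((ni : ℤ) - p.natDegree : ℤ) : WithTop ℤ) := by
  by_cases hp : p = 0
  · simp [defectTerm, hp]
  · rw [defectTerm, Polynomial.degree_eq_natDegree hp, if_neg hp]
    rfl

lemma lt_defect_iff {K : Type*} [Semiring K] {m : ℕ} {n : Fin m → ℕ} {q : Fin m → K[X]} {c : ℤ} :
    ((c : ℤ) : WithTop ℤ) < defect n q ↔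
      ∀ i, q i = 0 ∨ c < (n i : ℤ) - (q i).natDegree := by
  rw [defect, Finset.lt_inf_iff (WithTop.coe_lt_top c)]
  constructor
  · intro h i
    have h' := h i (Finset.mem_univ i)
    rw [defectTerm_eq] at h'
    by_cases h0 : q i = 0
    · exact Or.inl h0
    · right; rw [if_neg h0] at h'; exact_mod_cast h'
  · intro h i _
    rw [defectTerm_eq]
    by_cases h0 : q i = 0
    · rw [if_pos h0]; exact WithTop.coe_lt_top c
    · rw [if_neg h0]
      rcases h i with h0' | hlt
      · exact absurd h0' h0
      · exact_mod_cast hlt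

lemma defect_le_term {K : Type*} [Semiring K] {m : ℕ} (n : Fin m → ℕ) (p : Fin m → K[X])
    (i : Fin m) : defect n p ≤ defectTerm (n i) (p i) :=
  Finset.inf_le (Finset.mem_univ i)

lemma IsSolution.zero' {K : Type*} [CommSemiring K] {m : ℕ} (f : Fin m → PowerSeries K) (σ : ℕ) :
    IsSolution f σ (0 : Fin m → K[X]) := by
  intro k hk; simp

lemma IsSolution.add' {K : Type*} [CommSemiring K] {m : ℕ} {f : Fin m → PowerSeries K} {σ : ℕ}
    {a b : Fin m → K[X]} (ha : IsSolution f σ a) (hb : IsSolution f σ b) :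
    IsSolution f σ (a + b) := by
  intro k hk
  simp only [Pi.add_apply, Polynomial.coe_add, add_mul, Finset.sum_add_distrib, map_add,
    ha k hk, hb k hk, add_zero]

lemma IsSolution.polySmul {K : Type*} [CommRing K] {m : ℕ} {f : Fin m → PowerSeries K} {σ : ℕ}
    {q : Fin m → K[X]} (h : IsSolution f σ q) (g : K[X]) :
    IsSolution f σ (fun i => g * q i) := by
  intro k hk
  have heq : (∑ i, ((g * q i : K[X]) : PowerSeries K) * f i)
      = (g : PowerSeries K) * ∑ i, (q i : PowerSeries K) * f i := by
    rw [Finset.mul_sum]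
    exact Finset.sum_congr rfl fun i _ => by rw [Polynomial.coe_mul, mul_assoc]
  rw [heq, PowerSeries.coeff_mul]
  refine Finset.sum_eq_zero fun ab hab => ?_
  have hmem := Finset.HasAntidiagonal.mem_antidiagonal.mp hab
  rw [h ab.2 (by omega), mul_zero]

end AuxLemmas

/-- **Description of the solution spaces `L^σ_δ` in terms of a σ-basis.**  Let `P` be a
σ-basis (of nonzero vectors, with `defect (P r) = d r ∈ ℤ`) of a Hermite–Padé
interpolation problem over a field `K`, and let `δ ∈ ℤ`.  Then the set `L^σ_δ` of
solutions with defect strictly larger than `-δ` (the zero vector, having defect `⊤`,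
belongs to it) is the `K`-vector space spanned by the vectors `x^j • P r` with
`1 ≤ r ≤ m` and `0 ≤ j < d r + δ`, and its dimension over `K` equals
`Σ_r max (d r + δ) 0`. -/
theorem sigma_basis_span_and_dimension {K : Type*} [Field K] {m : ℕ}
    (f : Fin m → PowerSeries K) (n : Fin m → ℕ) (σ : ℕ)
    (P : Fin m → Fin m → K[X]) (hP : IsSigmaBasis f n σ P) (hP0 : ∀ r, P r ≠ 0)
    (d : Fin m → ℤ) (hd : ∀ r, defect n (P r) = ((d r : ℤ) : WithTop ℤ)) (δ : ℤ) :
    {q : Fin m → K[X] | IsSolution f σ q ∧ ((-δ : ℤ) : WithTop ℤ) < defect n q} =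
        (Submodule.span K
          {v : Fin m → K[X] |
            ∃ r : Fin m, ∃ j : ℕ, (j : ℤ) < d r + δ ∧ v = (X ^ j : K[X]) • P r} :
          Submodule K (Fin m → K[X])) ∧
      Module.finrank K
          (Submodule.span K
            {v : Fin m → K[X] |
              ∃ r : Fin m, ∃ j : ℕ, (j : ℤ) < d r + δ ∧ v = (X ^ j : K[X]) • P r}) =
        ∑ r, (d r + δ).toNat := by
  
  classical
  obtain ⟨hPsol, hPuniq⟩ := hP
  set S : Set (Fin m → K[X]) :=
    {v : Fin m → K[X] | ∃ r : Fin m, ∃ j : ℕ, (j : ℤ) < d r + δ ∧ v = (X ^ j : K[X]) • P r}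
    with hSdef
  have hPdeg : ∀ r i, P r i ≠ 0 → (d r : ℤ) ≤ (n i : ℤ) - ((P r i).natDegree : ℤ) := by
    intro r i hne
    have h1 := defect_le_term n (P r) i
    rw [hd r, defectTerm_eq, if_neg hne] at h1
    exact_mod_cast h1
  have hSL : ∀ v ∈ S, IsSolution f σ v ∧ ((-δ : ℤ) : WithTop ℤ) < defect n v := by
    rintro v ⟨r, j, hj, rfl⟩
    have hfun : ((X ^ j : K[X]) • P r) = fun i => X ^ j * P r i := by
      funext i; simp [smul_eq_mul]
    constructor
    · rw [hfun]; exact (hPsol r).polySmul _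
    · rw [lt_defect_iff]
      intro i
      by_cases h0 : P r i = 0
      · left; simp [hfun, h0]
      · right
        rw [hfun]
        rw [Polynomial.natDegree_mul (pow_ne_zero j Polynomial.X_ne_zero) h0,
          Polynomial.natDegree_X_pow]
        have hb := hPdeg r i h0
        push_cast
        omega
  have hmem : ∀ q : Fin m → K[X],
      (IsSolution f σ q ∧ ((-δ : ℤ) : WithTop ℤ) < defect n q) ↔ q ∈ Submodule.span K S := by
    intro q
    constructor
    · rintro ⟨hsol, hdef⟩
      obtain ⟨⟨α, hrep, -⟩, hbound⟩ := hPuniq q hsol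
      have hα : ∀ r, α r ≠ 0 → ((α r).natDegree : ℤ) < d r + δ := by
        intro r hr
        have hb := hbound α hrep r hr
        rw [hd r] at hb
        have hne : defect n q ≠ ⊤ := by
          intro htop; rw [htop] at hb; simp at hb
        obtain ⟨e, hq'⟩ := WithTop.ne_top_iff_exists.mp hne
        rw [← hq'] at hb hdef
        rw [← WithTop.coe_add] at hb
        have h1 : e + ((α r).natDegree : ℤ) ≤ d r := WithTop.coe_le_coe.mp hb
        have h2 : -δ < e := WithTop.coe_lt_coe.mp hdef
        omega
      have hq : q = ∑ r, (fun i => α r * P r i) := by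
        funext i
        rw [Finset.sum_apply]
        exact hrep i
      rw [hq]
      refine Submodule.sum_mem _ fun r _ => ?_
      by_cases hr : α r = 0
      · have h0 : (fun i => α r * P r i) = 0 := by funext i; simp [hr]
        rw [h0]; exact Submodule.zero_mem _
      · have hexp : (fun i => α r * P r i)
            = ∑ j ∈ Finset.range ((α r).natDegree + 1),
                (α r).coeff j • ((X ^ j : K[X]) • P r) := by
          funext i
          rw [Finset.sum_apply]
          have hterm : ∀ j, ((α r).coeff j • ((X ^ j : K[X]) • P r)) i
              = (Polynomial.C ((α r).coeff j) * X ^ j) * P r i := by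
            intro j; simp [smul_eq_mul, Polynomial.smul_eq_C_mul, mul_assoc]
          simp only [hterm]
          rw [← Finset.sum_mul]
          congr 1
          conv_lhs => rw [(α r).as_sum_range_C_mul_X_pow]
        rw [hexp]
        refine Submodule.sum_mem _ fun j hj => ?_
        refine Submodule.smul_mem _ _ (Submodule.subset_span ?_)
        refine ⟨r, j, ?_, rfl⟩
        have hj' := Finset.mem_range.mp hj
        have hαr := hα r hr
        omega
    · intro hq
      refine Submodule.span_induction ?_ ?_ ?_ ?_ hq
      · exact fun v hv => hSL v hv
      · exact ⟨IsSolution.zero' f σ, lt_defect_iff.mpr fun i => Or.inl rfl⟩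
      · rintro a b - - ⟨hsa, hda⟩ ⟨hsb, hdb⟩
        refine ⟨hsa.add' hsb, lt_defect_iff.mpr ?_⟩
        have ha := lt_defect_iff.mp hda
        have hb := lt_defect_iff.mp hdb
        intro i
        by_cases h0 : (a + b) i = 0
        · exact Or.inl h0
        right
        rcases ha i with h | h
        · rcases hb i with h' | h'
          · exact absurd (by simp [Pi.add_apply, h, h']) h0
          · simpa [Pi.add_apply, h] using h'
        · rcases hb i with h' | h'
          · simpa [Pi.add_apply, h'] using h
          · have hle := Polynomial.natDegree_add_le (a i) (b i)
            have h2 : (((a i + b i).natDegree : ℤ))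
                ≤ max ((a i).natDegree : ℤ) ((b i).natDegree : ℤ) := by
              rw [← Nat.cast_max]; exact_mod_cast hle
            simp only [Pi.add_apply]
            rcases max_cases ((a i).natDegree : ℤ) ((b i).natDegree : ℤ) with ⟨he, -⟩ | ⟨he, -⟩ <;>
              rw [he] at h2 <;> omega
      · rintro c x - ⟨hsx, hdx⟩
        constructor
        · have hs := hsx.polySmul (Polynomial.C c)
          have hfun : (c • x) = fun i => Polynomial.C c * x i := by
            funext i; simp [Polynomial.smul_eq_C_mul]
          rw [hfun]; exact hs
        · rw [lt_defect_iff]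
          have hx := lt_defect_iff.mp hdx
          intro i
          by_cases h0 : (c • x) i = 0
          · exact Or.inl h0
          right
          rcases hx i with h | h
          · exact absurd (by simp [h]) h0
          · have hle : ((c • x) i).natDegree ≤ (x i).natDegree := by
              simpa using Polynomial.natDegree_smul_le c (x i)
            have h2 : (((c • x) i).natDegree : ℤ) ≤ ((x i).natDegree : ℤ) := by
              exact_mod_cast hle
            omega
  constructor
  · ext q
    simp only [Set.mem_setOf_eq, SetLike.mem_coe]
    exact hmem q
  · set N : Fin m → ℕ := fun r => (d r + δ).toNat with hN
    set b : (Σ r : Fin m, Fin (N r)) → (Fin m → K[X]) :=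
      fun x => (X ^ (x.2 : ℕ) : K[X]) • P x.1 with hb
    have hrange : Set.range b = S := by
      ext v
      constructor
      · rintro ⟨⟨r, j⟩, rfl⟩
        exact ⟨r, j, Int.lt_toNat.mp j.2, rfl⟩
      · rintro ⟨r, j, hj, rfl⟩
        exact ⟨⟨r, ⟨j, Int.lt_toNat.mpr hj⟩⟩, rfl⟩
    have hli : LinearIndependent K b := by
      rw [Fintype.linearIndependent_iff]
      intro c hc
      set α : Fin m → K[X] := fun r => ∑ j : Fin (N r), Polynomial.C (c ⟨r, j⟩) * X ^ (j : ℕ)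
        with hα
      have hrep0 : ∀ i, (0 : Fin m → K[X]) i = ∑ r, α r * P r i := by
        intro i
        have h0 := congrFun hc i
        rw [Finset.sum_apply] at h0
        rw [← h0]
        rw [← Finset.univ_sigma_univ, Finset.sum_sigma]
        refine Finset.sum_congr rfl fun r _ => ?_
        rw [hα, Finset.sum_mul]
        refine Finset.sum_congr rfl fun j _ => ?_
        simp [hb, smul_eq_mul, Polynomial.smul_eq_C_mul, mul_assoc]
      obtain ⟨⟨β, hβ, hβuniq⟩, -⟩ := hPuniq 0 (IsSolution.zero' f σ)
      have hα0 : α = 0 := by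
        have h1 := hβuniq α hrep0
        have h2 := hβuniq 0 (by intro i; simp)
        exact h1.trans h2.symm
      rintro ⟨r, j⟩
      have hc0 := congrFun hα0 r
      have hcoeff := congrArg (fun p : K[X] => p.coeff (j : ℕ)) hc0
      simp only [hα, Pi.zero_apply, Polynomial.coeff_zero, Polynomial.finset_sum_coeff,
        Polynomial.coeff_C_mul, Polynomial.coeff_X_pow] at hcoeff
      rw [Finset.sum_eq_single j] at hcoeff
      · simpa using hcoeff
      · intro j' _ hne
        rw [if_neg (by simpa using fun h => hne (Fin.ext h.symm)), mul_zero]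
      · intro h; exact absurd (Finset.mem_univ j) h
    rw [← hrange, finrank_span_eq_card hli]
    simp [Fintype.card_sigma, hN]
end

section
/- Let R be a commutative integral domain, I ⊆ R a prime ideal, and A an s×t matrix with entries in R. Let A' be the reduction of A modulo I, let R_I denote the localisation of R at I (the ring of fractions r/u with r ∈ R and u ∈ R∖I), and let π : R_I → Frac(R/I) be the ring homomorphism sending r/u to (r mod I)/(u mod I). If the dimension over Frac(R) of the kernel of A equals the dimension over Frac(R/I) of the kernel of A', then the kernel of A' over Frac(R/I) equals the image under π (applied entrywise) of the set of vectors v ∈ (R_I)^t with A·v = 0. -/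
open Matrix

private lemma comp_mulVec_aux {α β ι κ : Type*} [Fintype κ] [CommSemiring α] [CommSemiring β]
    (h : α →+* β) (B : Matrix ι κ α) (x : κ → α) :
    ⇑h ∘ B.mulVec x = (B.map h).mulVec (⇑h ∘ x) := by
  funext i
  simp [Matrix.mulVec, dotProduct, map_sum, Function.comp]

private lemma mulVec_eq_sum_aux {α ι κ : Type*} [Fintype ι] [Fintype κ] [CommSemiring α]
    (B : Matrix ι κ α) (x : κ → α) :
    B.mulVec x = ∑ j, x j • Bᵀ j := by
  funext i
  simp [Matrix.mulVec, dotProduct, Finset.sum_apply, mul_comm]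

set_option maxHeartbeats 2000000 in
/-- **Good reduction of kernels.**  Let `R` be a commutative integral domain, `I ⊆ R`
a prime ideal and `A` an `s × t` matrix over `R`.  Let `A'` be the reduction of `A`
modulo `I`, let `R_I` be the localisation of `R` at `I`, and let
`π : R_I → Frac (R ⧸ I)` be the ring homomorphism sending `r / u` to
`(r mod I) / (u mod I)` (characterised by `π (r / 1) = (r mod I) / 1` for `r ∈ R`).
If the dimension over `Frac R` of the kernel of `A` equals the dimension over
`Frac (R ⧸ I)` of the kernel of `A'`, then the kernel of `A'` over `Frac (R ⧸ I)`
is exactly the image under `π` (applied entrywise) of the set of vectors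
`v ∈ R_I ^ t` with `A · v = 0`. -/
theorem kernel_eq_image_of_good_reduction {R : Type*} [CommRing R] [IsDomain R]
    (I : Ideal R) [I.IsPrime] {s t : ℕ} (A : Matrix (Fin s) (Fin t) R)
    (π : Localization.AtPrime I →+* FractionRing (R ⧸ I))
    (hπ : ∀ r : R,
      π (algebraMap R (Localization.AtPrime I) r) =
        algebraMap (R ⧸ I) (FractionRing (R ⧸ I)) (Ideal.Quotient.mk I r))
    (hdim : Module.finrank (FractionRing R)
          (LinearMap.ker (A.map (algebraMap R (FractionRing R))).mulVecLin) =
        Module.finrank (FractionRing (R ⧸ I))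
          (LinearMap.ker
            (A.map ((algebraMap (R ⧸ I) (FractionRing (R ⧸ I))).comp
              (Ideal.Quotient.mk I))).mulVecLin)) :
    (LinearMap.ker
        (A.map ((algebraMap (R ⧸ I) (FractionRing (R ⧸ I))).comp
          (Ideal.Quotient.mk I))).mulVecLin : Set (Fin t → FractionRing (R ⧸ I))) =
      (fun v : Fin t → Localization.AtPrime I => π ∘ v) ''
        {v : Fin t → Localization.AtPrime I |
          (A.map (algebraMap R (Localization.AtPrime I))).mulVec v = 0} := by
  classical
  set g : R →+* FractionRing (R ⧸ I) :=
    (algebraMap (R ⧸ I) (FractionRing (R ⧸ I))).comp (Ideal.Quotient.mk I) with hg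
  set A' : Matrix (Fin s) (Fin t) (FractionRing (R ⧸ I)) := A.map g with hA'
  set f : R →+* Localization.AtPrime I := algebraMap R (Localization.AtPrime I) with hf
  set AL : Matrix (Fin s) (Fin t) (Localization.AtPrime I) := A.map f with hAL
  set fK : R →+* FractionRing R := algebraMap R (FractionRing R) with hfK
  set AK : Matrix (Fin s) (Fin t) (FractionRing R) := A.map fK with hAK
  -- basic facts about π
  have hπf : ∀ r : R, π (f r) = g r := hπ
  -- the map φ : R_I → Frac R
  have hle : I.primeCompl ≤ nonZeroDivisors R := fun u hu =>
    mem_nonZeroDivisors_of_ne_zero (fun h => hu (by rw [h]; exact I.zero_mem))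
  have hle' : I.primeCompl ≤ (nonZeroDivisors R).comap (RingHom.id R) := hle
  set φ : Localization.AtPrime I →+* FractionRing R :=
    IsLocalization.map (FractionRing R) (RingHom.id R) hle' with hφ
  have hφf : ∀ r : R, φ (f r) = fK r := fun r => IsLocalization.map_eq hle' r
  have hφinj : Function.Injective φ := by
    rw [injective_iff_map_eq_zero]
    intro x hx
    obtain ⟨⟨a, u⟩, h⟩ := IsLocalization.surj (M := I.primeCompl) x
    have ha : fK a = 0 := by
      rw [← hφf, ← h, _root_.map_mul, hx, zero_mul]
    have ha0 : a = 0 := IsFractionRing.injective R (FractionRing R)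
      (by rw [map_zero]; exact ha)
    have hu : IsUnit (f u) := IsLocalization.map_units _ u
    have : x * f u = 0 := by rw [h, ha0, map_zero]
    exact (hu.mul_left_eq_zero).1 this
  -- surjectivity of π
  have hπsurj : Function.Surjective π := by
    intro y
    obtain ⟨⟨a, u⟩, rfl⟩ := IsLocalization.mk'_surjective (nonZeroDivisors (R ⧸ I)) y
    obtain ⟨a₀, rfl⟩ := Ideal.Quotient.mk_surjective a
    obtain ⟨u₀, hu₀⟩ := Ideal.Quotient.mk_surjective (u : R ⧸ I)
    have hu₀I : u₀ ∈ I.primeCompl := by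
      intro hmem
      exact nonZeroDivisors.coe_ne_zero u
        (by rw [← hu₀]; exact (Ideal.Quotient.eq_zero_iff_mem).2 hmem)
    refine ⟨IsLocalization.mk' (Localization.AtPrime I) a₀ ⟨u₀, hu₀I⟩, ?_⟩
    have hunit : IsUnit (algebraMap (R ⧸ I) (FractionRing (R ⧸ I)) (u : R ⧸ I)) :=
      IsLocalization.map_units _ u
    apply hunit.mul_right_cancel
    rw [IsLocalization.mk'_spec]
    calc π (IsLocalization.mk' (Localization.AtPrime I) a₀ ⟨u₀, hu₀I⟩) *
          algebraMap (R ⧸ I) (FractionRing (R ⧸ I)) (u : R ⧸ I)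
        = π (IsLocalization.mk' (Localization.AtPrime I) a₀ ⟨u₀, hu₀I⟩) * π (f u₀) := by
          rw [hπf, hg]; simp [hu₀]
      _ = π (IsLocalization.mk' (Localization.AtPrime I) a₀ ⟨u₀, hu₀I⟩ * f u₀) := by
          rw [_root_.map_mul]
      _ = π (f a₀) := by rw [IsLocalization.mk'_spec]
      _ = algebraMap (R ⧸ I) (FractionRing (R ⧸ I)) (Ideal.Quotient.mk I a₀) := hπf a₀
  -- equality of ranks
  have hrank : Module.finrank (FractionRing R) (LinearMap.range AK.mulVecLin) =
      Module.finrank (FractionRing (R ⧸ I)) (LinearMap.range A'.mulVecLin) := by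
    have h1 := LinearMap.finrank_range_add_finrank_ker AK.mulVecLin
    have h2 := LinearMap.finrank_range_add_finrank_ker A'.mulVecLin
    simp only [Module.finrank_pi, Fintype.card_fin] at h1 h2
    omega
  -- choose independent columns of A'
  obtain ⟨bset, hbsub, hbspan, hbind⟩ :=
    exists_linearIndependent (FractionRing (R ⧸ I)) (Set.range A'ᵀ)
  have hbfin : bset.Finite := (Set.finite_range _).subset hbsub
  haveI : Fintype bset := hbfin.fintype
  choose γ hγ using fun x : bset => hbsub x.2
  have hcolind : LinearIndependent (FractionRing (R ⧸ I)) (fun x : bset => A'ᵀ (γ x)) := by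
    have : (fun x : bset => A'ᵀ (γ x)) = fun x : bset => (x : Fin s → FractionRing (R ⧸ I)) :=
      funext hγ
    rw [this]; exact hbind
  have hr2 : Module.finrank (FractionRing (R ⧸ I)) (LinearMap.range A'.mulVecLin) =
      Fintype.card bset := by
    rw [Matrix.range_mulVecLin, show A'.col = A'ᵀ from rfl, ← hbspan, finrank_span_set_eq_card hbind, Set.toFinset_card]
  -- choose independent rows
  set N' : Matrix (Fin s) bset (FractionRing (R ⧸ I)) := fun i x => A' i (γ x) with hN'
  obtain ⟨cset, hcsub, hcspan, hcind⟩ :=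
    exists_linearIndependent (FractionRing (R ⧸ I)) (Set.range (fun i : Fin s => N' i))
  have hcfin : cset.Finite := (Set.finite_range _).subset hcsub
  haveI : Fintype cset := hcfin.fintype
  choose ρ hρ using fun y : cset => hcsub y.2
  have hNT : N'ᵀ = fun x : bset => A'ᵀ (γ x) := rfl
  have hcard : Fintype.card cset = Fintype.card bset := by
    have e1 : Module.finrank (FractionRing (R ⧸ I))
        (Submodule.span (FractionRing (R ⧸ I)) cset) = Fintype.card cset := by
      rw [finrank_span_set_eq_card hcind, Set.toFinset_card]
    have e2 : Submodule.span (FractionRing (R ⧸ I)) cset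
        = LinearMap.range N'ᵀ.mulVecLin := by
      rw [hcspan, Matrix.range_mulVecLin, show N'ᵀ.col = N'ᵀᵀ from rfl, Matrix.transpose_transpose]
    have e3 : N'ᵀ.rank = N'.rank := Matrix.rank_transpose N'
    have e4 : N'.rank = Fintype.card bset := by
      rw [Matrix.rank, Matrix.range_mulVecLin, show N'.col = N'ᵀ from rfl, hNT, finrank_span_eq_card hcolind]
    rw [e2] at e1
    rw [← e1, ← e4, ← e3]
    rfl
  set e : cset ≃ bset := Fintype.equivOfCardEq hcard with he
  set ρe : bset → Fin s := fun p => ρ (e.symm p) with hρe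
  -- the square submatrix is invertible mod I
  set M' : Matrix bset bset (FractionRing (R ⧸ I)) := fun p q => A' (ρe p) (γ q) with hM'
  have hM'rows : (fun p : bset => M' p) =
      fun p : bset => ((e.symm p : cset) : bset → FractionRing (R ⧸ I)) :=
    funext fun p => hρ (e.symm p)
  have hM'unit : IsUnit M' := by
    rw [← Matrix.linearIndependent_rows_iff_isUnit, show M'.row = fun p => M' p from rfl, hM'rows]
    exact hcind.comp _ e.symm.injective
  have hM'det : M'.det ≠ 0 := by
    have := (Matrix.isUnit_iff_isUnit_det M').1 hM'unit
    exact this.ne_zero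
  -- determinant over R
  set dM : R := (A.submatrix ρe γ).det with hdM
  have hgdM : g dM = M'.det := by
    rw [hdM, RingHom.map_det]
    congr 1
  have hdMI : dM ∈ I.primeCompl := by
    intro hmem
    apply hM'det
    rw [← hgdM, hg]
    simp only [RingHom.comp_apply]
    rw [Ideal.Quotient.eq_zero_iff_mem.2 hmem, map_zero]
  have hdM0 : dM ≠ 0 := fun h => hdMI (by rw [h]; exact I.zero_mem)
  -- invertibility over the localization
  set ML : Matrix bset bset (Localization.AtPrime I) := fun p q => AL (ρe p) (γ q) with hML
  have hMLdet : IsUnit ML.det := by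
    have hmap : ML = (A.submatrix ρe γ).map f := rfl
    rw [hmap, ← RingHom.mapMatrix_apply, ← RingHom.map_det]
    exact IsLocalization.map_units _ ⟨dM, hdMI⟩
  have hMLunit : IsUnit ML := (Matrix.isUnit_iff_isUnit_det ML).2 hMLdet
  -- invertibility over Frac R
  set MK : Matrix bset bset (FractionRing R) := fun p q => AK (ρe p) (γ q) with hMK
  have hMKdet : MK.det ≠ 0 := by
    have hmap : MK = (A.submatrix ρe γ).map fK := rfl
    rw [hmap, ← RingHom.mapMatrix_apply, ← RingHom.map_det]
    intro h0
    exact hdM0 (IsFractionRing.injective R (FractionRing R) (by rw [h0, map_zero]))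
  have hMKunit : IsUnit MK := (Matrix.isUnit_iff_isUnit_det MK).2 (isUnit_iff_ne_zero.2 hMKdet)
  have hMKinj : Function.Injective MK.mulVec := Matrix.mulVec_injective_iff_isUnit.2 hMKunit
  -- independence of the chosen columns over Frac R
  set NK : Matrix (Fin s) bset (FractionRing R) := fun i x => AK i (γ x) with hNK
  have hNKinj : Function.Injective NK.mulVec := by
    intro d d' hdd
    apply hMKinj
    funext p
    have : NK.mulVec d (ρe p) = NK.mulVec d' (ρe p) := by rw [hdd]
    exact this
  have hNKind : LinearIndependent (FractionRing R) (fun x : bset => AKᵀ (γ x)) :=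
    Matrix.mulVec_injective_iff.1 hNKinj
  -- the chosen columns span the column space over Frac R
  have hspanK : Submodule.span (FractionRing R)
      (Set.range (fun x : bset => AKᵀ (γ x))) = LinearMap.range AK.mulVecLin := by
    apply Submodule.eq_of_le_of_finrank_le
    · rw [Matrix.range_mulVecLin]
      exact Submodule.span_mono (Set.range_comp_subset_range γ AKᵀ)
    · rw [finrank_span_eq_card hNKind, hrank, hr2]
  -- commutation of π with mulVec
  have hmapπ : AL.map ⇑π = A' := by
    rw [hAL, Matrix.map_map, hA']
    funext i j
    exact hπf (A i j)
  have hπmul : ∀ x : Fin t → Localization.AtPrime I,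
      ⇑π ∘ AL.mulVec x = A'.mulVec (⇑π ∘ x) := fun x => by
    rw [comp_mulVec_aux, hmapπ]
  -- commutation of φ with mulVec
  have hmapφ : AL.map ⇑φ = AK := by
    rw [hAL, Matrix.map_map, hAK]
    funext i j
    exact hφf (A i j)
  -- every column of AL lies in the span of the chosen columns, over the localization
  set NL : Matrix (Fin s) bset (Localization.AtPrime I) := fun i x => AL i (γ x) with hNL
  have hmapNLφ : NL.map ⇑φ = NK := by
    funext i x
    exact hφf (A i (γ x))
  have hmapNLπ : NL.map ⇑π = N' := by
    funext i x
    exact hπf (A i (γ x))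
  have hcolL : ∀ j : Fin t, ∃ c : bset → Localization.AtPrime I,
      NL.mulVec c = ALᵀ j := by
    intro j
    -- solve over Frac R
    have h1 : AKᵀ j ∈ Submodule.span (FractionRing R)
        (Set.range (fun x : bset => AKᵀ (γ x))) := by
      rw [hspanK, Matrix.range_mulVecLin]
      exact Submodule.subset_span ⟨j, rfl⟩
    rw [Submodule.mem_span_range_iff_exists_fun] at h1
    obtain ⟨d, hd⟩ := h1
    have hd' : NK.mulVec d = AKᵀ j := by
      rw [mulVec_eq_sum_aux]
      rw [← hd]
      congr 1
    -- solve the square system over the localization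
    haveI : Invertible ML := hMLunit.invertible
    obtain ⟨c, hc⟩ := ML.mulVec_surjective_of_invertible (fun p => ALᵀ j (ρe p))
    refine ⟨c, ?_⟩
    have hφc : ⇑φ ∘ c = d := by
      apply hMKinj
      have hmlφ : ML.map ⇑φ = MK := by
        funext p q
        exact hφf (A (ρe p) (γ q))
      have h2 : ⇑φ ∘ ML.mulVec c = MK.mulVec (⇑φ ∘ c) := by
        rw [comp_mulVec_aux, hmlφ]
      have h3 : MK.mulVec d = fun p => AKᵀ j (ρe p) := by
        funext p
        exact congrFun hd' (ρe p)
      rw [← h2, hc, h3]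
      funext p
      exact hφf (A (ρe p) j)
    apply funext
    intro i
    apply hφinj
    have h4 : ⇑φ ∘ NL.mulVec c = NK.mulVec (⇑φ ∘ c) := by
      rw [comp_mulVec_aux, hmapNLφ]
    calc φ (NL.mulVec c i) = NK.mulVec (⇑φ ∘ c) i := congrFun h4 i
      _ = NK.mulVec d i := by rw [hφc]
      _ = AKᵀ j i := congrFun hd' i
      _ = φ (ALᵀ j i) := (hφf (A i j)).symm
  -- main set equality
  ext w
  simp only [SetLike.mem_coe, LinearMap.mem_ker, Matrix.mulVecLin_apply, Set.mem_image,
    Set.mem_setOf_eq]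
  constructor
  · intro hw
    -- lift w componentwise
    choose u hu using fun j => hπsurj (w j)
    have huw : ⇑π ∘ u = w := funext hu
    -- express AL *ᵥ u via the chosen columns
    have hmem : AL.mulVec u ∈ LinearMap.range NL.mulVecLin := by
      have h5 : AL.mulVec u = ∑ j, u j • ALᵀ j := mulVec_eq_sum_aux AL u
      rw [h5]
      refine Submodule.sum_mem _ fun j _ => Submodule.smul_mem _ _ ?_
      obtain ⟨c, hc⟩ := hcolL j
      exact ⟨c, by rw [Matrix.mulVecLin_apply, hc]⟩
    obtain ⟨lam, hlam⟩ := hmem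
    rw [Matrix.mulVecLin_apply] at hlam
    -- the coefficients die under π
    have hπb : ⇑π ∘ AL.mulVec u = 0 := by
      rw [hπmul u, huw, hw]
    have hN'lam : N'.mulVec (⇑π ∘ lam) = 0 := by
      rw [← hmapNLπ, ← comp_mulVec_aux, hlam, hπb]
    have hlam0 : ⇑π ∘ lam = 0 := by
      have hinj : Function.Injective N'.mulVec :=
        Matrix.mulVec_injective_iff.2 hcolind
      apply hinj
      rw [hN'lam, Matrix.mulVec_zero]
    -- build the correction vector
    set z : Fin t → Localization.AtPrime I :=
      fun j => ∑ x : bset, if γ x = j then lam x else 0 with hz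
    have hALz : AL.mulVec z = NL.mulVec lam := by
      funext i
      simp only [Matrix.mulVec, dotProduct, hz, Finset.mul_sum, mul_ite, mul_zero]
      rw [Finset.sum_comm]
      refine Finset.sum_congr rfl fun x _ => ?_
      rw [Finset.sum_ite_eq (Finset.univ) (γ x) (fun j => AL i j * lam x)]
      simp
      exact Or.inl rfl
    have hπz : ⇑π ∘ z = 0 := by
      funext j
      simp only [Function.comp_apply, hz, map_sum, Pi.zero_apply]
      refine Finset.sum_eq_zero fun x _ => ?_
      rw [apply_ite π, map_zero]
      have : π (lam x) = 0 := congrFun hlam0 x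
      rw [this, ite_self]
    refine ⟨u - z, ?_, ?_⟩
    · show AL.mulVec (u - z) = 0
      rw [Matrix.mulVec_sub, hALz, hlam, sub_self]
    · show ⇑π ∘ (u - z) = w
      funext j
      simp only [Function.comp_apply, Pi.sub_apply, map_sub]
      rw [hu j]
      have : π (z j) = 0 := congrFun hπz j
      rw [this, sub_zero]
  · rintro ⟨v, hv, rfl⟩
    show A'.mulVec (⇑π ∘ v) = 0
    rw [← hπmul v, hv]
    funext i
    simp
end
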